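/- arXiv:2102.06708 — 6 statements merged into one kernel-verified Lean document; each statement's English description precedes it below -/
import Mathlib

section
/- Let σ₁ be an m×m and σ₂ a p×p positive definite Hermitian complex matrix. Then log(σ₁ ⊗ σ₂) = (log σ₁) ⊗ I_p + I_m ⊗ (log σ₂), where ⊗ denotes the Kronecker product. -/
open Matrix
open scoped Kronecker ComplexOrder

/-- The matrix logarithm of a Hermitian complex matrix, defined via the functional calculus:
apply the real logarithm to the eigenvalues in a spectral decomposition.  (Junk value `0` on
non-Hermitian matrices.) -/
noncomputable def matLog {d : Type*} [Fintype d] [DecidableEq d]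
    (A : Matrix d d ℂ) : Matrix d d ℂ :=
  if h : A.IsHermitian then
    (h.eigenvectorUnitary : Matrix d d ℂ) *
      Matrix.diagonal (fun i => (Real.log (h.eigenvalues i) : ℂ)) *
      star (h.eigenvectorUnitary : Matrix d d ℂ)
  else 0

namespace MatLogAux

variable {n : Type*} [Fintype n] [DecidableEq n]

noncomputable instance : ContinuousMap.UniqueHom ℝ (Matrix n n ℂ) :=
  inferInstance

noncomputable instance : ContinuousFunctionalCalculus ℝ (n → ℂ) IsSelfAdjoint :=
  IsSelfAdjoint.instContinuousFunctionalCalculus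

noncomputable def evalSAH (i : n) : (n → ℂ) →⋆ₐ[ℂ] ℂ :=
  { Pi.evalAlgHom ℂ (fun _ => ℂ) i with map_star' := fun _ => rfl }

noncomputable def conjDiag (U : Matrix.unitaryGroup n ℂ) : (n → ℂ) →⋆ₐ[ℂ] Matrix n n ℂ where
  toFun v := (U : Matrix n n ℂ) * Matrix.diagonal v * star (U : Matrix n n ℂ)
  map_one' := by
    simp [Pi.one_def (M := fun _ : n ↦ ℂ), Unitary.mul_star_self_of_mem U.prop]
  map_mul' v w := by
    have key {a b c d e f : Matrix n n ℂ} : (a*b*c)*(d*e*f) = a*(b*(c*d)*e)*f := by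
      simp only [mul_assoc]
    simp only [key, Unitary.star_mul_self_of_mem U.prop, mul_one,
      Matrix.diagonal_mul_diagonal]
    rfl
  map_zero' := by simp [Pi.zero_def (M := fun _ : n ↦ ℂ)]
  map_add' v w := by
    have h : Matrix.diagonal (v + w) = Matrix.diagonal v + Matrix.diagonal w := by
      ext i j
      by_cases hij : i = j <;> simp [Matrix.diagonal_apply, hij]
    rw [h, mul_add, add_mul]
  commutes' r := by
    have h : Matrix.diagonal (algebraMap ℂ (n → ℂ) r) = algebraMap ℂ (Matrix n n ℂ) r := by
      ext i j
      by_cases hij : i = j <;>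
        simp [Matrix.diagonal_apply, hij, Matrix.algebraMap_matrix_apply, Pi.algebraMap_apply]
    rw [h, ← Algebra.commutes r ((U : Matrix n n ℂ)), mul_assoc,
      Unitary.mul_star_self_of_mem U.prop, mul_one]
  map_star' v := by
    have : star ((U : Matrix n n ℂ) * Matrix.diagonal v * star (U : Matrix n n ℂ))
        = (U : Matrix n n ℂ) * star (Matrix.diagonal v) * star (U : Matrix n n ℂ) := by
      simp only [StarMul.star_mul, star_star, mul_assoc]
    rw [this, Matrix.star_eq_conjTranspose (Matrix.diagonal v), Matrix.diagonal_conjTranspose]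

lemma cfc_pi_apply (g : ℝ → ℝ) (hg : Continuous g) (a : n → ℂ) (ha : IsSelfAdjoint a) (i : n) :
    cfc g a i = cfc g (a i) :=
  StarAlgHom.map_cfc (S := ℂ) (evalSAH i) g a hg.continuousOn
    (by exact continuous_apply i) ha (ha.apply i)

lemma conjDiag_continuous (U : Matrix.unitaryGroup n ℂ) : Continuous (conjDiag U) := by
  show Continuous fun v : n → ℂ => (U : Matrix n n ℂ) * Matrix.diagonal v * star (U : Matrix n n ℂ)
  have h : Continuous fun v : n → ℂ => Matrix.diagonal v := by
    apply continuous_matrix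
    intro i j
    by_cases hij : i = j
    · subst hij; simpa [Matrix.diagonal_apply_eq] using continuous_apply i
    · simpa [Matrix.diagonal_apply_ne _ hij] using continuous_const
  exact (continuous_const.matrix_mul h).matrix_mul continuous_const

/-- Key invariance lemma: `matLog` of `U D U⋆` for positive diagonal `D`. -/
lemma matLog_spectral (U : Matrix.unitaryGroup n ℂ) (d : n → ℝ) (hd : ∀ i, 0 < d i) :
    matLog ((U : Matrix n n ℂ) * Matrix.diagonal (fun i => (d i : ℂ)) * star (U : Matrix n n ℂ))
      = (U : Matrix n n ℂ) * Matrix.diagonal (fun i => (Real.log (d i) : ℂ))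
        * star (U : Matrix n n ℂ) := by
  rcases isEmpty_or_nonempty n with hn | hn
  · exact Subsingleton.elim _ _
  set a : n → ℂ := fun i => (d i : ℂ) with ha_def
  have ha : IsSelfAdjoint a := funext fun i => Complex.conj_ofReal _
  set A : Matrix n n ℂ := (U : Matrix n n ℂ) * Matrix.diagonal a * star (U : Matrix n n ℂ)
    with hA_def
  have hAsa : IsSelfAdjoint A := ha.map (conjDiag U)
  have hA : A.IsHermitian := hAsa
  -- the spectrum of `A`
  have hsp : spectrum ℝ A = Set.range d := by
    ext x
    have hconj : spectrum ℂ ((U : Matrix n n ℂ) * Matrix.diagonal a * star (U : Matrix n n ℂ))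
        = spectrum ℂ (Matrix.diagonal a) := spectrum.units_conjugate (u := Unitary.toUnits U)
    rw [← spectrum.algebraMap_mem_iff ℂ, hA_def,
      hconj, spectrum_diagonal]
    constructor
    · rintro ⟨i, hi⟩
      exact ⟨i, Complex.ofReal_injective hi⟩
    · rintro ⟨i, rfl⟩
      exact ⟨i, rfl⟩
  -- a continuous replacement for `Real.log`
  obtain ⟨j⟩ := hn
  set ε : ℝ := Finset.univ.inf' (show Finset.univ.Nonempty from ⟨j, Finset.mem_univ j⟩) d with hε_def
  have hε : 0 < ε := by
    rw [hε_def, Finset.lt_inf'_iff]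
    exact fun i _ => hd i
  have hεle : ∀ i, ε ≤ d i := fun i => Finset.inf'_le _ (Finset.mem_univ i)
  set g : ℝ → ℝ := fun x => Real.log (max x ε) with hg_def
  have hg : Continuous g := by
    apply Real.continuousOn_log.comp_continuous (continuous_id.max continuous_const)
    intro x
    simp only [Set.mem_compl_iff, Set.mem_singleton_iff]
    exact ne_of_gt (lt_of_lt_of_le hε (le_max_right _ _))
  -- matLog A = cfc g A
  have h1 : matLog A = cfc Real.log A := by
    rw [matLog, dif_pos hA, Matrix.IsHermitian.cfc_eq]
    rfl
  have h2 : cfc Real.log A = cfc g A := by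
    apply cfc_congr
    intro x hx
    rw [hsp] at hx
    obtain ⟨i, rfl⟩ := hx
    simp only [hg_def, max_eq_left (hεle i)]
  have h3 : cfc g A = conjDiag U (cfc g a) := by
    refine (StarAlgHom.map_cfc (S := ℂ) (conjDiag U) g a hg.continuousOn
      (conjDiag_continuous U) ha hAsa).symm
  have h4 : cfc g a = fun i => (Real.log (d i) : ℂ) := by
    funext i
    rw [cfc_pi_apply g hg a ha i]
    have hai : a i = algebraMap ℝ ℂ (d i) := rfl
    rw [hai, cfc_algebraMap (A := ℂ)]
    show ((g (d i) : ℝ) : ℂ) = _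
    rw [hg_def]
    simp only [max_eq_left (hεle i)]
  rw [h1, h2, h3, h4]
  rfl

end MatLogAux

/-- For positive definite Hermitian matrices `σ₁` (of size `m`) and `σ₂` (of size `p`),
`log (σ₁ ⊗ σ₂) = (log σ₁) ⊗ I + I ⊗ (log σ₂)`. -/
theorem matLog_kronecker {m p : ℕ}
    (σ₁ : Matrix (Fin m) (Fin m) ℂ) (σ₂ : Matrix (Fin p) (Fin p) ℂ)
    (hσ₁ : σ₁.PosDef) (hσ₂ : σ₂.PosDef) :
    matLog (σ₁ ⊗ₖ σ₂) =
      (matLog σ₁) ⊗ₖ (1 : Matrix (Fin p) (Fin p) ℂ) +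
        (1 : Matrix (Fin m) (Fin m) ℂ) ⊗ₖ (matLog σ₂) := by
  classical
  have h₁ := hσ₁.1
  have h₂ := hσ₂.1
  set U₁ : Matrix (Fin m) (Fin m) ℂ := (h₁.eigenvectorUnitary : Matrix (Fin m) (Fin m) ℂ) with hU₁
  set U₂ : Matrix (Fin p) (Fin p) ℂ := (h₂.eigenvectorUnitary : Matrix (Fin p) (Fin p) ℂ) with hU₂
  -- the Kronecker product of the two unitaries is unitary
  have hstar : ∀ {q r : ℕ} (A : Matrix (Fin q) (Fin q) ℂ) (B : Matrix (Fin r) (Fin r) ℂ),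
      star (A ⊗ₖ B) = star A ⊗ₖ star B := by
    intro q r A B
    ext i k
    simp [Matrix.conjTranspose_apply, Matrix.kroneckerMap_apply, mul_comm]
  have hUmem : (U₁ ⊗ₖ U₂) ∈ Matrix.unitaryGroup (Fin m × Fin p) ℂ := by
    rw [Matrix.mem_unitaryGroup_iff, hstar, ← Matrix.mul_kronecker_mul]
    rw [Unitary.mul_star_self_of_mem h₁.eigenvectorUnitary.prop,
      Unitary.mul_star_self_of_mem h₂.eigenvectorUnitary.prop, Matrix.one_kronecker_one]
  set U : Matrix.unitaryGroup (Fin m × Fin p) ℂ := ⟨U₁ ⊗ₖ U₂, hUmem⟩ with hU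
  set d : Fin m × Fin p → ℝ := fun ij => h₁.eigenvalues ij.1 * h₂.eigenvalues ij.2 with hd_def
  have hd : ∀ ij, 0 < d ij := fun ij =>
    mul_pos (hσ₁.eigenvalues_pos ij.1) (hσ₂.eigenvalues_pos ij.2)
  have hfact : σ₁ ⊗ₖ σ₂ =
      (U : Matrix (Fin m × Fin p) (Fin m × Fin p) ℂ) *
        Matrix.diagonal (fun ij => (d ij : ℂ)) * star (U : Matrix (Fin m × Fin p) (Fin m × Fin p) ℂ) := by
    conv_lhs => rw [h₁.spectral_theorem, h₂.spectral_theorem, Unitary.conjStarAlgAut_apply,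
      Unitary.conjStarAlgAut_apply]
    rw [Matrix.mul_kronecker_mul, Matrix.mul_kronecker_mul]
    congr 1
    · congr 1
      rw [Matrix.diagonal_kronecker_diagonal]
      congr 1
      funext ij
      simp [hd_def]
    · rw [hstar]
  rw [hfact, MatLogAux.matLog_spectral U d hd]
  -- now expand the diagonal of logs
  have hlog : Matrix.diagonal (fun ij : Fin m × Fin p => (Real.log (d ij) : ℂ)) =
      Matrix.diagonal (fun i => (Real.log (h₁.eigenvalues i) : ℂ)) ⊗ₖ (1 : Matrix (Fin p) (Fin p) ℂ)
      + (1 : Matrix (Fin m) (Fin m) ℂ) ⊗ₖ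
          Matrix.diagonal (fun j => (Real.log (h₂.eigenvalues j) : ℂ)) := by
    rw [show (1 : Matrix (Fin p) (Fin p) ℂ) = Matrix.diagonal (fun _ => (1 : ℂ)) by
        simp [Matrix.diagonal_one]]
    rw [show (1 : Matrix (Fin m) (Fin m) ℂ) = Matrix.diagonal (fun _ => (1 : ℂ)) by
        simp [Matrix.diagonal_one]]
    rw [Matrix.diagonal_kronecker_diagonal, Matrix.diagonal_kronecker_diagonal]
    ext ij kl
    by_cases hij : ij = kl
    · subst hij
      simp only [Matrix.diagonal_apply_eq, Matrix.add_apply, hd_def]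
      rw [Real.log_mul (ne_of_gt (hσ₁.eigenvalues_pos ij.1)) (ne_of_gt (hσ₂.eigenvalues_pos ij.2))]
      push_cast
      ring
    · simp [Matrix.diagonal_apply_ne _ hij, hij]
  rw [hlog, mul_add, add_mul]
  have hc1 : (U : Matrix (Fin m × Fin p) (Fin m × Fin p) ℂ) *
      (Matrix.diagonal (fun i => (Real.log (h₁.eigenvalues i) : ℂ)) ⊗ₖ (1 : Matrix (Fin p) (Fin p) ℂ))
      * star (U : Matrix (Fin m × Fin p) (Fin m × Fin p) ℂ) =
      (matLog σ₁) ⊗ₖ (1 : Matrix (Fin p) (Fin p) ℂ) := by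
    show (U₁ ⊗ₖ U₂) * _ * star (U₁ ⊗ₖ U₂) = _
    rw [hstar, ← Matrix.mul_kronecker_mul, ← Matrix.mul_kronecker_mul]
    rw [matLog, dif_pos h₁]
    congr 1
    rw [mul_one, Unitary.mul_star_self_of_mem h₂.eigenvectorUnitary.prop]
  have hc2 : (U : Matrix (Fin m × Fin p) (Fin m × Fin p) ℂ) *
      ((1 : Matrix (Fin m) (Fin m) ℂ) ⊗ₖ Matrix.diagonal (fun j => (Real.log (h₂.eigenvalues j) : ℂ)))
      * star (U : Matrix (Fin m × Fin p) (Fin m × Fin p) ℂ) =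
      (1 : Matrix (Fin m) (Fin m) ℂ) ⊗ₖ (matLog σ₂) := by
    show (U₁ ⊗ₖ U₂) * _ * star (U₁ ⊗ₖ U₂) = _
    rw [hstar, ← Matrix.mul_kronecker_mul, ← Matrix.mul_kronecker_mul]
    rw [matLog, dif_pos h₂]
    congr 1
    rw [mul_one, Unitary.mul_star_self_of_mem h₁.eigenvectorUnitary.prop]
  rw [hc1, hc2]
end

section
/- For every real s > 0, the function α ↦ -[α·log(1 - e^{-s}) - log(1 - e^{-α·s})]/(1 - α) tends, as α → 1 from the left, to log(1 - e^{-s}) - s·e^{-s}/(1 - e^{-s}), which equals -H(e^{-s})/(1 - e^{-s}). -/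
open Filter
open scoped Topology

/-- The Shannon function `H(p) = -p log p - (1-p) log (1-p)` (natural logarithm). -/
noncomputable def shannonH (p : ℝ) : ℝ :=
  -(p * Real.log p) - (1 - p) * Real.log (1 - p)

/-- For `s > 0`, as `α → 1⁻` (within `(0,1)`),
`-[α log(1-e^{-s}) - log(1-e^{-αs})]/(1-α) → log(1-e^{-s}) - s e^{-s}/(1-e^{-s})`,
and this limit equals `-H(e^{-s})/(1-e^{-s})`. -/
theorem petz_renyi_RI_limit (s : ℝ) (hs : 0 < s) :
    Tendsto
      (fun α : ℝ =>
        -(α * Real.log (1 - Real.exp (-s)) - Real.log (1 - Real.exp (-(α * s)))) / (1 - α))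
      (nhdsWithin 1 (Set.Ioo (0 : ℝ) 1))
      (nhds (Real.log (1 - Real.exp (-s)) - s * Real.exp (-s) / (1 - Real.exp (-s)))) ∧
    Real.log (1 - Real.exp (-s)) - s * Real.exp (-s) / (1 - Real.exp (-s)) =
      -shannonH (Real.exp (-s)) / (1 - Real.exp (-s)) := by
  have hlt : Real.exp (-s) < 1 := by
    rw [Real.exp_lt_one_iff]; linarith
  have hne : (1 : ℝ) - Real.exp (-s) ≠ 0 := by linarith
  set g : ℝ → ℝ := fun α => α * Real.log (1 - Real.exp (-s)) - Real.log (1 - Real.exp (-(α * s)))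
  have hderiv : HasDerivAt g
      (Real.log (1 - Real.exp (-s)) - s * Real.exp (-s) / (1 - Real.exp (-s))) 1 := by
    have h1 : HasDerivAt (fun α : ℝ => α * Real.log (1 - Real.exp (-s)))
        (Real.log (1 - Real.exp (-s))) 1 := by
      simpa using (hasDerivAt_id (1:ℝ)).mul_const (Real.log (1 - Real.exp (-s)))
    have h2 : HasDerivAt (fun α : ℝ => 1 - Real.exp (-(α * s))) (s * Real.exp (-s)) 1 := by
      have : HasDerivAt (fun α : ℝ => Real.exp (-(α * s))) (-s * Real.exp (-s)) 1 := by
        have hinner : HasDerivAt (fun α : ℝ => -(α * s)) (-s) 1 := by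
          simpa [Pi.neg_def] using ((hasDerivAt_id (1:ℝ)).mul_const s).neg
        simpa [mul_comm, Function.comp_def] using (Real.hasDerivAt_exp (-(1 * s))).comp 1 hinner
      simpa using (this.const_sub 1)
    have h3 : HasDerivAt (fun α : ℝ => Real.log (1 - Real.exp (-(α * s))))
        (s * Real.exp (-s) / (1 - Real.exp (-s))) 1 := by
      have := h2.log (by simpa using hne)
      simpa using this
    exact h1.sub h3
  constructor
  · have hslope := hasDerivAt_iff_tendsto_slope.mp hderiv
    have hmono : nhdsWithin (1:ℝ) (Set.Ioo 0 1) ≤ nhdsWithin 1 {(1:ℝ)}ᶜ :=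
      nhdsWithin_mono 1 (fun x hx => ne_of_lt hx.2)
    have := hslope.mono_left hmono
    refine this.congr' ?_
    filter_upwards [self_mem_nhdsWithin] with α hα
    have h1 : α ≠ 1 := ne_of_lt hα.2
    have hg1 : g 1 = 0 := by simp [g]
    rw [slope_def_field, hg1, sub_zero, show α - 1 = -(1 - α) by ring, div_neg, ← neg_div]
  · have hexp : Real.log (Real.exp (-s)) = -s := Real.log_exp _
    rw [shannonH, hexp]
    field_simp
    ring
end

section
/- Let n ≥ 1, let s, t : Fin n → ℝ with sₖ > 0 and tₖ > 0 for all k, let L be a real symplectic 2n×2n matrix (Lᵀ J L = J), and let m̃ ∈ ℝ^{2n}. For α ∈ (0,1) the matrix M(α) = Lᵀ·D(α·s)·L + D((1-α)·t) is positive definite, and the function α ↦ (1/(1-α))·m̃ᵀ·M(α)⁻¹·m̃ tends, as α → 1 from the left, to ∑ₖ tₖ·(m̃ₖ² + m̃_{n+k}²). -/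
open Matrix Filter
open scoped Topology

/-- The real hyperbolic cotangent. -/
noncomputable def coth (x : ℝ) : ℝ := Real.cosh x / Real.sinh x

/-- The canonical symplectic form `J = [[0, I], [-I, 0]]` as a `2n × 2n` real matrix. -/
noncomputable def symplecticJ (n : ℕ) : Matrix (Fin n ⊕ Fin n) (Fin n ⊕ Fin n) ℝ :=
  Matrix.fromBlocks 0 1 (-1) 0

/-- The `2n × 2n` diagonal matrix whose `k`-th and `(n+k)`-th diagonal entries both equal
`(1/2)·coth(rₖ/2)`. -/
noncomputable def Dmat (n : ℕ) (r : Fin n → ℝ) :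
    Matrix (Fin n ⊕ Fin n) (Fin n ⊕ Fin n) ℝ :=
  Matrix.diagonal
    (Sum.elim (fun k => (1 / 2) * coth (r k / 2)) (fun k => (1 / 2) * coth (r k / 2)))

lemma coth_pos {x : ℝ} (hx : 0 < x) : 0 < coth x :=
  div_pos (Real.cosh_pos x) (Real.sinh_pos_iff.mpr hx)

lemma Dmat_posDef (n : ℕ) (r : Fin n → ℝ) (hr : ∀ k, 0 < r k) : (Dmat n r).PosDef := by
  rw [Dmat, Matrix.posDef_diagonal_iff]
  rintro (k | k) <;>
    exact mul_pos (by norm_num) (coth_pos (half_pos (hr _)))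

lemma tendsto_div_sinh : Tendsto (fun x : ℝ => x / Real.sinh x) (𝓝[≠] 0) (𝓝 1) := by
  have h : Tendsto (fun x : ℝ => Real.sinh x / x) (𝓝[≠] 0) (𝓝 1) := by
    have := Real.hasDerivAt_sinh 0
    rw [hasDerivAt_iff_tendsto_slope] at this
    rw [Real.cosh_zero] at this
    refine this.congr fun x => ?_
    simp [slope_def_field, Real.sinh_zero]
  have h2 := h.inv₀ one_ne_zero
  rw [inv_one] at h2
  exact h2.congr fun x => by rw [inv_div]

lemma tendsto_eps_coth {c : ℝ} (hc : 0 < c) :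
    Tendsto (fun ε : ℝ => ε * ((1 / 2) * coth (ε * c / 2))) (𝓝[>] 0) (𝓝 c⁻¹) := by
  have hu : Tendsto (fun ε : ℝ => ε * c / 2) (𝓝[>] 0) (𝓝[≠] 0) := by
    rw [tendsto_nhdsWithin_iff]
    constructor
    · have : Tendsto (fun ε : ℝ => ε * c / 2) (𝓝 0) (𝓝 (0 * c / 2)) :=
        (tendsto_id.mul_const c).div_const 2
      simpa using this.mono_left nhdsWithin_le_nhds
    · filter_upwards [self_mem_nhdsWithin] with ε (hε : 0 < ε)
      exact (by positivity : (0:ℝ) < ε * c / 2).ne'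
  have h1 : Tendsto (fun ε : ℝ => (ε * c / 2) / Real.sinh (ε * c / 2)) (𝓝[>] 0) (𝓝 1) :=
    tendsto_div_sinh.comp hu
  have h2 : Tendsto (fun ε : ℝ => Real.cosh (ε * c / 2)) (𝓝[>] 0) (𝓝 1) := by
    have : Tendsto (fun ε : ℝ => Real.cosh (ε * c / 2)) (𝓝 0) (𝓝 (Real.cosh (0 * c / 2))) :=
      (Real.continuous_cosh.comp ((continuous_id.mul continuous_const).div_const 2)).tendsto 0
    simpa using this.mono_left nhdsWithin_le_nhds
  have key : Tendsto (fun ε : ℝ => c⁻¹ * ((ε * c / 2) / Real.sinh (ε * c / 2) *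
      Real.cosh (ε * c / 2))) (𝓝[>] 0) (𝓝 (c⁻¹ * (1 * 1))) :=
    tendsto_const_nhds.mul (h1.mul h2)
  norm_num at key
  refine key.congr fun ε => ?_
  have hc' : c ≠ 0 := hc.ne'
  have h3 : c⁻¹ * (ε * c / 2) = ε * (1 / 2) := by field_simp
  rw [coth, div_mul_eq_mul_div, mul_div_assoc, ← mul_assoc, h3, mul_assoc]

lemma tendsto_matrix_diagonal {ι : Type*} [Fintype ι] [DecidableEq ι] {l : Filter ℝ}
    {v : ℝ → ι → ℝ} {w : ι → ℝ} (h : ∀ i, Tendsto (fun x => v x i) l (𝓝 (w i))) :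
    Tendsto (fun x => Matrix.diagonal (v x)) l (𝓝 (Matrix.diagonal w)) := by
  refine tendsto_pi_nhds.mpr ?_
  intro i
  rw [tendsto_pi_nhds]
  intro j
  rcases eq_or_ne i j with rfl | hij
  · simpa [Matrix.diagonal_apply_eq] using h i
  · simpa [Matrix.diagonal_apply_ne _ hij] using (tendsto_const_nhds : Tendsto (fun _ : ℝ => (0:ℝ)) l _)

/-- For `sₖ, tₖ > 0`, `L` symplectic and `m̃ ∈ ℝ^{2n}`, the matrix
`M(α) = Lᵀ·D(αs)·L + D((1-α)t)` is positive definite for `α ∈ (0,1)`, and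
`(1/(1-α))·m̃ᵀ M(α)⁻¹ m̃ → ∑ₖ tₖ (m̃ₖ² + m̃_{n+k}²)` as `α → 1⁻`. -/
theorem petz_renyi_RIII_limit (n : ℕ) (hn : 1 ≤ n)
    (s t : Fin n → ℝ) (hs : ∀ k, 0 < s k) (ht : ∀ k, 0 < t k)
    (L : Matrix (Fin n ⊕ Fin n) (Fin n ⊕ Fin n) ℝ)
    (hL : Lᵀ * symplecticJ n * L = symplecticJ n)
    (mt : Fin n ⊕ Fin n → ℝ) :
    (∀ α ∈ Set.Ioo (0 : ℝ) 1,
        (Lᵀ * Dmat n (α • s) * L + Dmat n ((1 - α) • t)).PosDef) ∧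
    Tendsto
      (fun α : ℝ =>
        (1 / (1 - α)) *
          (mt ⬝ᵥ (Lᵀ * Dmat n (α • s) * L + Dmat n ((1 - α) • t))⁻¹ *ᵥ mt))
      (nhdsWithin 1 (Set.Ioo (0 : ℝ) 1))
      (nhds (∑ k : Fin n, t k * ((mt (Sum.inl k)) ^ 2 + (mt (Sum.inr k)) ^ 2))) := by
  set M : ℝ → Matrix (Fin n ⊕ Fin n) (Fin n ⊕ Fin n) ℝ :=
    fun α => Lᵀ * Dmat n (α • s) * L + Dmat n ((1 - α) • t) with hM
  have hpos : ∀ α ∈ Set.Ioo (0 : ℝ) 1, (M α).PosDef := by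
    rintro α ⟨hα0, hα1⟩
    have hD1 : (Dmat n (α • s)).PosSemidef :=
      (Dmat_posDef n _ (fun k => by
        simp only [Pi.smul_apply, smul_eq_mul]; exact mul_pos hα0 (hs k))).posSemidef
    have hD2 : (Dmat n ((1 - α) • t)).PosDef :=
      Dmat_posDef n _ (fun k => by
        simp only [Pi.smul_apply, smul_eq_mul]; exact mul_pos (by linarith) (ht k))
    have h1 : (Lᵀ * Dmat n (α • s) * L).PosSemidef := by
      have := hD1.conjTranspose_mul_mul_same L
      simpa using this
    exact Matrix.PosDef.posSemidef_add h1 hD2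
  refine ⟨hpos, ?_⟩
  -- the limit diagonal matrix
  set T : Matrix (Fin n ⊕ Fin n) (Fin n ⊕ Fin n) ℝ :=
    Matrix.diagonal (Sum.elim (fun k => (t k)⁻¹) (fun k => (t k)⁻¹)) with hT
  set N : ℝ → Matrix (Fin n ⊕ Fin n) (Fin n ⊕ Fin n) ℝ := fun α => (1 - α) • M α with hN
  have hsub : Tendsto (fun α : ℝ => 1 - α) (𝓝[Set.Ioo (0:ℝ) 1] 1) (𝓝[>] 0) := by
    rw [tendsto_nhdsWithin_iff]
    constructor
    · have : Tendsto (fun α : ℝ => 1 - α) (𝓝 1) (𝓝 (1 - 1)) :=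
        (continuous_const.sub continuous_id).tendsto 1
      simpa using this.mono_left nhdsWithin_le_nhds
    · filter_upwards [self_mem_nhdsWithin] with α hα
      exact sub_pos.mpr hα.2
  -- convergence of N to T
  have hNT : Tendsto N (𝓝[Set.Ioo (0:ℝ) 1] 1) (𝓝 T) := by
    have heq : ∀ α : ℝ, N α = (1 - α) • (Lᵀ * Dmat n (α • s) * L) +
        Matrix.diagonal (Sum.elim (fun k => (1 - α) * ((1/2) * coth ((1 - α) * t k / 2)))
          (fun k => (1 - α) * ((1/2) * coth ((1 - α) * t k / 2)))) := by
      intro α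
      simp only [hN, hM, smul_add]
      congr 1
      ext i j
      rcases eq_or_ne i j with rfl | hij
      · rcases i with k | k <;>
          simp [Dmat, Matrix.diagonal_apply_eq, Matrix.smul_apply, smul_eq_mul]
      · simp [Dmat, Matrix.diagonal_apply_ne _ hij, Matrix.smul_apply]
    have h1 : Tendsto (fun α : ℝ => (1 - α) • (Lᵀ * Dmat n (α • s) * L))
        (𝓝[Set.Ioo (0:ℝ) 1] 1) (𝓝 0) := by
      have hDcont : Tendsto (fun α : ℝ => Dmat n (α • s)) (𝓝[Set.Ioo (0:ℝ) 1] 1)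
          (𝓝 (Dmat n ((1:ℝ) • s))) := by
        refine (tendsto_matrix_diagonal ?_).mono_left nhdsWithin_le_nhds
        intro i
        have key : ∀ c : ℝ, 0 < c → ContinuousAt (fun α : ℝ => (1/2) * coth (α * c / 2)) 1 := by
          intro c hc
          have hsin : Real.sinh ((1:ℝ) * c / 2) ≠ 0 := by
            exact (Real.sinh_pos_iff.mpr (by positivity)).ne'
          simp only [coth]
          exact continuousAt_const.mul
            (((Real.continuous_cosh.continuousAt).comp
              (((continuous_id.mul continuous_const).div_const 2).continuousAt)).div
             ((Real.continuous_sinh.continuousAt).comp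
              (((continuous_id.mul continuous_const).div_const 2).continuousAt)) hsin)
        rcases i with k | k <;>
          simpa [Pi.smul_apply, smul_eq_mul] using (key (s k) (hs k)).tendsto
      have hMul : Tendsto (fun α : ℝ => Lᵀ * Dmat n (α • s) * L) (𝓝[Set.Ioo (0:ℝ) 1] 1)
          (𝓝 (Lᵀ * Dmat n ((1:ℝ) • s) * L)) :=
        (tendsto_const_nhds.mul hDcont).mul tendsto_const_nhds
      have hsc : Tendsto (fun α : ℝ => 1 - α) (𝓝[Set.Ioo (0:ℝ) 1] 1) (𝓝 0) :=
        hsub.mono_right nhdsWithin_le_nhds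
      have := hsc.smul hMul
      simpa using this
    have h2 : Tendsto (fun α : ℝ =>
        Matrix.diagonal (Sum.elim (fun k => (1 - α) * ((1/2) * coth ((1 - α) * t k / 2)))
          (fun k => (1 - α) * ((1/2) * coth ((1 - α) * t k / 2)))))
        (𝓝[Set.Ioo (0:ℝ) 1] 1) (𝓝 T) := by
      refine tendsto_matrix_diagonal ?_
      rintro (k | k) <;>
        exact ((tendsto_eps_coth (ht k)).comp hsub)
    have := h1.add h2
    rw [zero_add] at this
    exact this.congr fun α => (heq α).symm
  -- determinant of T is nonzero
  have hdetT : T.det ≠ 0 := by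
    rw [hT, Matrix.det_diagonal]
    refine Finset.prod_ne_zero_iff.mpr fun i _ => ?_
    rcases i with k | k <;> exact inv_ne_zero (ht k).ne'
  -- convergence of inverses
  have hdet : Tendsto (fun α => (N α).det) (𝓝[Set.Ioo (0:ℝ) 1] 1) (𝓝 T.det) :=
    ((continuous_id.matrix_det).tendsto T).comp hNT
  have hadj : Tendsto (fun α => (N α).adjugate) (𝓝[Set.Ioo (0:ℝ) 1] 1) (𝓝 T.adjugate) :=
    ((continuous_id.matrix_adjugate).tendsto T).comp hNT
  have hinv : Tendsto (fun α => (N α)⁻¹) (𝓝[Set.Ioo (0:ℝ) 1] 1) (𝓝 T⁻¹) := by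
    have : Tendsto (fun α => ((N α).det)⁻¹ • (N α).adjugate) (𝓝[Set.Ioo (0:ℝ) 1] 1)
        (𝓝 ((T.det)⁻¹ • T.adjugate)) := (hdet.inv₀ hdetT).smul hadj
    refine this.congr' ?_ |>.mono_right (le_of_eq ?_)
    · filter_upwards with α
      rw [Matrix.inv_def, Ring.inverse_eq_inv']
    · rw [Matrix.inv_def, Ring.inverse_eq_inv']
  -- the quadratic form is continuous
  have hq : Tendsto (fun α => mt ⬝ᵥ (N α)⁻¹ *ᵥ mt) (𝓝[Set.Ioo (0:ℝ) 1] 1)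
      (𝓝 (mt ⬝ᵥ T⁻¹ *ᵥ mt)) := by
    have hc : Continuous fun A : Matrix (Fin n ⊕ Fin n) (Fin n ⊕ Fin n) ℝ =>
        mt ⬝ᵥ A *ᵥ mt :=
      continuous_const.dotProduct (continuous_id.matrix_mulVec continuous_const)
    exact (hc.tendsto _).comp hinv
  -- identify the limit value
  have hval : mt ⬝ᵥ T⁻¹ *ᵥ mt =
      ∑ k : Fin n, t k * ((mt (Sum.inl k)) ^ 2 + (mt (Sum.inr k)) ^ 2) := by
    have hTinv : T⁻¹ = Matrix.diagonal (Sum.elim t t) := by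
      apply Matrix.inv_eq_right_inv
      rw [hT, Matrix.diagonal_mul_diagonal]
      ext i j
      rcases eq_or_ne i j with rfl | hij
      · rcases i with k | k <;>
          simp [Matrix.one_apply_eq, inv_mul_cancel₀ (ht k).ne']
      · simp [Matrix.diagonal_apply_ne _ hij, Matrix.one_apply_ne hij]
    rw [hTinv]
    simp only [dotProduct, Matrix.mulVec_diagonal]
    rw [Fintype.sum_sum_type, ← Finset.sum_add_distrib]
    refine Finset.sum_congr rfl fun k _ => ?_
    simp only [Sum.elim_inl, Sum.elim_inr]
    ring
  rw [← hval]
  refine hq.congr' ?_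
  filter_upwards [self_mem_nhdsWithin] with α hα
  have hα1 : (1 : ℝ) - α ≠ 0 := (sub_pos.mpr hα.2).ne'
  have hMα : IsUnit (M α).det := ((hpos α hα).det_pos).ne'.isUnit
  have : (N α)⁻¹ = (1 - α)⁻¹ • (M α)⁻¹ := by
    apply Matrix.inv_eq_right_inv
    show ((1 - α) • M α) * ((1 - α)⁻¹ • (M α)⁻¹) = 1
    rw [Matrix.smul_mul, Matrix.mul_smul, smul_smul, Matrix.mul_nonsing_inv _ hMα,
      mul_inv_cancel₀ hα1, one_smul]
  rw [this, Matrix.smul_mulVec, dotProduct_smul, smul_eq_mul, one_div]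
end

section
/- Let n ≥ 1, let s, t : Fin n → ℝ with sₖ > 0 and tₖ > 0 for all k, and let L be a real symplectic 2n×2n matrix (Lᵀ J L = J). Then the function α ↦ (1/(2(1-α)))·log det(I_{2n} + D((1-α)·t)^{-1/2} · Lᵀ·D(α·s)·L · D((1-α)·t)^{-1/2}) tends, as α → 1 from the left, to (1/2)·∑ₖ tₖ·[(Lᵀ·D(s)·L)ₖₖ + (Lᵀ·D(s)·L)_{n+k,n+k}]. -/
open Matrix Filter
open scoped Topology

/-- The inverse square root `D(r)^{-1/2}`: the diagonal matrix whose `k`-th and `(n+k)`-th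
diagonal entries both equal `((1/2)·coth(rₖ/2))^{-1/2}`. -/
noncomputable def DmatInvSqrt (n : ℕ) (r : Fin n → ℝ) :
    Matrix (Fin n ⊕ Fin n) (Fin n ⊕ Fin n) ℝ :=
  Matrix.diagonal
    (Sum.elim (fun k => (Real.sqrt ((1 / 2) * coth (r k / 2)))⁻¹)
      (fun k => (Real.sqrt ((1 / 2) * coth (r k / 2)))⁻¹))

lemma coth_eq (x : ℝ) : coth x = Real.cosh x / Real.sinh x := rfl

lemma hasDerivAt_coth (x : ℝ) (hx : Real.sinh x ≠ 0) :
    HasDerivAt coth ((Real.sinh x * Real.sinh x - Real.cosh x * Real.cosh x) /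
      Real.sinh x ^ 2) x := by
  have h := (Real.hasDerivAt_cosh x).div (Real.hasDerivAt_sinh x) hx
  have he : coth = fun y => Real.cosh y / Real.sinh y := rfl
  rw [he]; exact h

lemma hasDerivAt_tanh_zero : HasDerivAt Real.tanh 1 0 := by
  have h := (Real.hasDerivAt_sinh 0).div (Real.hasDerivAt_cosh 0) (ne_of_gt (Real.cosh_pos 0))
  have he : Real.tanh = fun y => Real.sinh y / Real.cosh y :=
    funext fun y => Real.tanh_eq_sinh_div_cosh y
  rw [he]; refine h.congr_deriv ?_; simp

/-- For `sₖ, tₖ > 0` and `L` symplectic,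
`(1/(2(1-α)))·log det(I + D((1-α)t)^{-1/2} Lᵀ D(αs) L D((1-α)t)^{-1/2})`
tends, as `α → 1⁻`, to `(1/2)·∑ₖ tₖ [(Lᵀ D(s) L)ₖₖ + (Lᵀ D(s) L)_{n+k,n+k}]`. -/
theorem petz_renyi_RIV_det_limit (n : ℕ) (hn : 1 ≤ n)
    (s t : Fin n → ℝ) (hs : ∀ k, 0 < s k) (ht : ∀ k, 0 < t k)
    (L : Matrix (Fin n ⊕ Fin n) (Fin n ⊕ Fin n) ℝ)
    (hL : Lᵀ * symplecticJ n * L = symplecticJ n) :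
    Tendsto
      (fun α : ℝ =>
        (1 / (2 * (1 - α))) *
          Real.log
            ((1 + DmatInvSqrt n ((1 - α) • t) * (Lᵀ * Dmat n (α • s) * L) *
                DmatInvSqrt n ((1 - α) • t)).det))
      (nhdsWithin 1 (Set.Ioo (0 : ℝ) 1))
      (nhds ((1 / 2) * ∑ k : Fin n,
        t k * ((Lᵀ * Dmat n s * L) (Sum.inl k) (Sum.inl k)
          + (Lᵀ * Dmat n s * L) (Sum.inr k) (Sum.inr k)))) := by
  classical
  set tt : Fin n ⊕ Fin n → ℝ := Sum.elim t t with htt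
  set ss : Fin n ⊕ Fin n → ℝ := Sum.elim s s with hss
  have hss_pos : ∀ c, 0 < ss c := by rintro (k | k) <;> exact hs k
  set τ : ℝ → Fin n ⊕ Fin n → ℝ := fun α i => 2 * Real.tanh ((1 - α) * tt i / 2) with hτ
  set M : ℝ → Matrix (Fin n ⊕ Fin n) (Fin n ⊕ Fin n) ℝ :=
    fun α => Lᵀ * Dmat n (α • s) * L with hM
  set E : ℝ → Fin n ⊕ Fin n → Fin n ⊕ Fin n → ℝ :=
    fun α a b => (if a = b then (1 : ℝ) else 0) + τ α a * M α a b with hE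
  set g : ℝ → ℝ := fun α => (1 + Matrix.diagonal (τ α) * M α).det with hg
  -- τ vanishes at 1
  have hτ1 : ∀ a, τ 1 a = 0 := by
    intro a; simp [hτ, sub_self, Real.tanh_zero]
  -- Dmat as clean diagonal
  have hDfun : ∀ α : ℝ, Dmat n (α • s) =
      Matrix.diagonal (fun c => (1 / 2) * coth (α * ss c / 2)) := by
    intro α
    unfold Dmat
    refine congrArg Matrix.diagonal (funext fun c => ?_)
    cases c with
    | inl k => simp [hss, Pi.smul_apply, smul_eq_mul]
    | inr k => simp [hss, Pi.smul_apply, smul_eq_mul]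
  -- entries of the matrix in g
  have hEntry : ∀ α a b, (1 + Matrix.diagonal (τ α) * M α) a b = E α a b := by
    intro α a b
    simp [hE, Matrix.add_apply, Matrix.one_apply, Matrix.diagonal_mul]
  have hE1 : ∀ a b, E 1 a b = if a = b then (1 : ℝ) else 0 := by
    intro a b; simp [hE, hτ1]
  -- derivative of τ
  have hτderiv : ∀ a, HasDerivAt (fun α => τ α a) (-(tt a)) 1 := by
    intro a
    simp only [hτ]
    have hin : HasDerivAt (fun α : ℝ => (1 - α) * tt a / 2) (-(tt a) / 2) 1 := by
      have h1 : HasDerivAt (fun α : ℝ => (1 : ℝ) - α) (-1) 1 :=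
        (hasDerivAt_id (1 : ℝ)).const_sub 1
      have := (h1.mul_const (tt a)).div_const 2
      refine this.congr_deriv ?_
      ring
    have htanh : HasDerivAt Real.tanh 1 ((fun α : ℝ => (1 - α) * tt a / 2) 1) := by
      have h0 : ((fun α : ℝ => (1 - α) * tt a / 2) 1) = 0 := by simp
      rw [h0]; exact hasDerivAt_tanh_zero
    have hcomp := (htanh.comp 1 hin).const_mul (2 : ℝ)
    have h2 : HasDerivAt (fun α : ℝ => 2 * Real.tanh ((1 - α) * tt a / 2))
        (2 * (1 * (-(tt a) / 2))) 1 := by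
      simpa [Function.comp_def] using hcomp
    convert h2 using 1
    ring
  -- differentiability of entries of M
  have hMdiff : ∀ a b, ∃ m', HasDerivAt (fun α => M α a b) m' 1 := by
    intro a b
    have hform : (fun α => M α a b)
        = fun α => ∑ c, L c a * ((1 / 2) * coth (α * ss c / 2)) * L c b := by
      funext α
      simp only [hM, hDfun α, Matrix.mul_apply, Matrix.diagonal_apply, Matrix.transpose_apply,
        mul_ite, ite_mul, mul_zero, zero_mul, Finset.sum_ite_eq, Finset.sum_ite_eq', Finset.mem_univ, if_true]
    have hterm : ∀ c : Fin n ⊕ Fin n, ∃ d', HasDerivAt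
        (fun α => L c a * ((1 / 2) * coth (α * ss c / 2)) * L c b) d' 1 := by
      intro c
      have hsinh : Real.sinh (1 * ss c / 2) ≠ 0 := by
        refine ne_of_gt (Real.sinh_pos_iff.mpr ?_)
        have := hss_pos c; linarith
      have hin : HasDerivAt (fun α : ℝ => α * ss c / 2) (ss c / 2) 1 := by
        have := ((hasDerivAt_id (1 : ℝ)).mul_const (ss c)).div_const 2
        refine this.congr_deriv ?_
        ring
      have hc := (hasDerivAt_coth _ hsinh).comp 1 hin
      exact ⟨_, ((hc.const_mul (1 / 2 : ℝ)).const_mul (L c a)).mul_const (L c b)⟩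
    choose d' hd' using hterm
    refine ⟨∑ c, d' c, ?_⟩
    rw [hform]
    exact HasDerivAt.fun_sum (fun c _ => hd' c)
  choose m' hm' using hMdiff
  -- derivative of entries
  set e' : Fin n ⊕ Fin n → Fin n ⊕ Fin n → ℝ := fun a b => -(tt a) * M 1 a b with he'
  have hEderiv : ∀ a b, HasDerivAt (fun α => E α a b) (e' a b) 1 := by
    intro a b
    simp only [hE]
    have h := ((hτderiv a).mul (hm' a b)).const_add (if a = b then (1 : ℝ) else 0)
    refine h.congr_deriv ?_
    rw [he', hτ1]
    ring
  -- derivative of g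
  set D : ℝ := -∑ i, tt i * M 1 i i with hD
  have hG : HasDerivAt g D 1 := by
    have hgform : g = fun α => ∑ σ : Equiv.Perm (Fin n ⊕ Fin n),
        ((Equiv.Perm.sign σ : ℤ) : ℝ) * ∏ i, E α (σ i) i := by
      funext α
      show (1 + Matrix.diagonal (τ α) * M α).det = _
      rw [Matrix.det_apply']
      exact Finset.sum_congr rfl fun σ _ => by
        rw [Finset.prod_congr rfl fun i _ => hEntry α (σ i) i]
    have hterm : ∀ σ : Equiv.Perm (Fin n ⊕ Fin n), HasDerivAt
        (fun α => ((Equiv.Perm.sign σ : ℤ) : ℝ) * ∏ i, E α (σ i) i)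
        (((Equiv.Perm.sign σ : ℤ) : ℝ) *
          ∑ i, (∏ j ∈ Finset.univ.erase i, E 1 (σ j) j) • e' (σ i) i) 1 :=
      fun σ => (HasDerivAt.fun_finsetProd (fun i _ => hEderiv (σ i) i)).const_mul _
    have hsum := HasDerivAt.fun_sum (fun σ (_ : σ ∈ Finset.univ) => hterm σ)
    rw [hgform]
    refine hsum.congr_deriv (Eq.symm ?_)
    -- identify the derivative value
    have hzero : ∀ σ : Equiv.Perm (Fin n ⊕ Fin n), σ ∈ Finset.univ → σ ≠ 1 →
        ((Equiv.Perm.sign σ : ℤ) : ℝ) *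
          ∑ i, (∏ j ∈ Finset.univ.erase i, E 1 (σ j) j) • e' (σ i) i = 0 := by
      intro σ _ hσ
      have hmoved : ∃ a, σ a ≠ a := by
        by_contra h
        push_neg at h
        exact hσ (Equiv.ext fun a => h a)
      refine mul_eq_zero_of_right _ (Finset.sum_eq_zero fun i _ => ?_)
      refine smul_eq_zero_of_left ?_ _
      obtain ⟨a, ha⟩ := hmoved
      have hjj : ∃ j, j ≠ i ∧ σ j ≠ j := by
        by_cases hai : a = i
        · refine ⟨σ a, ?_, fun h => ha (σ.injective h)⟩
          rw [hai] at ha ⊢; exact ha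
        · exact ⟨a, hai, ha⟩
      obtain ⟨j, hji, hj⟩ := hjj
      refine Finset.prod_eq_zero (Finset.mem_erase.mpr ⟨hji, Finset.mem_univ j⟩) ?_
      rw [hE1, if_neg hj]
    have hmain := Finset.sum_eq_single_of_mem (1 : Equiv.Perm (Fin n ⊕ Fin n))
      (Finset.mem_univ _) hzero
    rw [hmain]
    simp only [Equiv.Perm.sign_one, Units.val_one, Int.cast_one, one_mul, Equiv.Perm.one_apply]
    have hprod : ∀ i : Fin n ⊕ Fin n, (∏ j ∈ Finset.univ.erase i, E 1 j j) = 1 :=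
      fun i => Finset.prod_eq_one fun j _ => by rw [hE1, if_pos rfl]
    rw [hD, ← Finset.sum_neg_distrib]
    refine Finset.sum_congr rfl fun i _ => ?_
    rw [hprod i, one_smul, he']
    ring
  -- g 1 = 1
  have hg1 : g 1 = 1 := by
    have hdiag : Matrix.diagonal (τ 1) = (0 : Matrix (Fin n ⊕ Fin n) (Fin n ⊕ Fin n) ℝ) := by
      rw [show τ 1 = fun _ => (0 : ℝ) from funext hτ1]
      simp [Matrix.diagonal_zero]
    show (1 + Matrix.diagonal (τ 1) * M 1).det = 1
    rw [hdiag]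
    simp
  -- derivative of log ∘ g
  have hlog : HasDerivAt (fun α => Real.log (g α)) D 1 := by
    have h := (Real.hasDerivAt_log (by rw [hg1]; exact one_ne_zero)).comp 1 hG
    simpa [hg1, Function.comp_def] using h
  -- slope tendsto
  have hslope : Tendsto (fun α => Real.log (g α) / (α - 1)) (𝓝[≠] (1 : ℝ)) (𝓝 D) := by
    have h := hasDerivAt_iff_tendsto_slope.mp hlog
    have heq : ∀ α, slope (fun α => Real.log (g α)) 1 α = Real.log (g α) / (α - 1) := by
      intro α
      by_cases hα : α = (1 : ℝ)
      · subst hα; simp [slope_def_field, hg1]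
      · have h1 : α - 1 ≠ 0 := sub_ne_zero.mpr hα
        rw [slope_def_field, hg1, Real.log_one, sub_zero]
    rwa [show slope (fun α => Real.log (g α)) 1 = fun α => Real.log (g α) / (α - 1) from
      funext heq] at h
  have hsub : Set.Ioo (0 : ℝ) 1 ⊆ {(1 : ℝ)}ᶜ := fun x hx => ne_of_lt hx.2
  have hslope' : Tendsto (fun α => -(1 / 2) * (Real.log (g α) / (α - 1)))
      (𝓝[Set.Ioo (0 : ℝ) 1] 1) (𝓝 (-(1 / 2) * D)) :=
    (hslope.mono_left (nhdsWithin_mono _ hsub)).const_mul _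
  -- value identification
  have hM1 : M 1 = Lᵀ * Dmat n s * L := by
    simp only [hM, one_smul]
  have hval : -(1 / 2) * D = (1 / 2) * ∑ k : Fin n,
      t k * ((Lᵀ * Dmat n s * L) (Sum.inl k) (Sum.inl k)
        + (Lᵀ * Dmat n s * L) (Sum.inr k) (Sum.inr k)) := by
    rw [hD, hM1, neg_mul_neg, Fintype.sum_sum_type]
    congr 1
    rw [← Finset.sum_add_distrib]
    refine Finset.sum_congr rfl fun k _ => ?_
    simp only [htt, Sum.elim_inl, Sum.elim_inr]
    ring
  -- eventual equality of the two functions on Ioo 0 1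
  have hcong : ∀ α ∈ Set.Ioo (0 : ℝ) 1,
      (1 / (2 * (1 - α))) *
        Real.log
          ((1 + DmatInvSqrt n ((1 - α) • t) * (Lᵀ * Dmat n (α • s) * L) *
              DmatInvSqrt n ((1 - α) • t)).det)
      = -(1 / 2) * (Real.log (g α) / (α - 1)) := by
    intro α hα
    have h1α : (0 : ℝ) < 1 - α := by linarith [hα.2]
    set Ev : Fin n ⊕ Fin n → ℝ := Sum.elim
        (fun k => (Real.sqrt ((1 / 2) * coth ((1 - α) * t k / 2)))⁻¹)
        (fun k => (Real.sqrt ((1 / 2) * coth ((1 - α) * t k / 2)))⁻¹) with hEv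
    have hDIS : DmatInvSqrt n ((1 - α) • t) = Matrix.diagonal Ev := by
      unfold DmatInvSqrt
      refine congrArg Matrix.diagonal (funext fun c => ?_)
      cases c with
      | inl k => simp only [Sum.elim_inl, hEv, Pi.smul_apply, smul_eq_mul]
      | inr k => simp only [Sum.elim_inr, hEv, Pi.smul_apply, smul_eq_mul]
    have key : ∀ x : ℝ, 0 < x →
        (Real.sqrt ((1 / 2) * coth x))⁻¹ * (Real.sqrt ((1 / 2) * coth x))⁻¹
          = 2 * Real.tanh x := by
      intro x hx
      have hsinh : 0 < Real.sinh x := Real.sinh_pos_iff.mpr hx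
      have hcoth : 0 < coth x := div_pos (Real.cosh_pos x) hsinh
      have hc : (0 : ℝ) ≤ (1 / 2) * coth x := by
        have : (0 : ℝ) < (1 / 2) * coth x := by
          have h2 : (0 : ℝ) < (1 / 2 : ℝ) := by norm_num
          exact mul_pos h2 hcoth
        linarith
      rw [← mul_inv, Real.mul_self_sqrt hc, Real.tanh_eq_sinh_div_cosh, coth_eq,
        mul_inv, inv_div]
      norm_num
    have hfun : (fun i => Ev i * Ev i) = τ α := by
      funext c
      cases c with
      | inl k =>
        have h := key ((1 - α) * t k / 2) (by have := ht k; positivity)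
        exact h
      | inr k =>
        have h := key ((1 - α) * t k / 2) (by have := ht k; positivity)
        exact h
    have hdet : (1 + DmatInvSqrt n ((1 - α) • t) * (Lᵀ * Dmat n (α • s) * L) *
        DmatInvSqrt n ((1 - α) • t)).det = g α := by
      show _ = (1 + Matrix.diagonal (τ α) * (Lᵀ * Dmat n (α • s) * L)).det
      rw [hDIS, Matrix.det_one_add_mul_comm, ← Matrix.mul_assoc,
        Matrix.diagonal_mul_diagonal, hfun]
    rw [hdet]
    have hne : α - 1 ≠ 0 := sub_ne_zero.mpr (ne_of_lt hα.2)
    have hne' : (1 : ℝ) - α ≠ 0 := ne_of_gt h1α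
    field_simp
    ring
  rw [show ((1 / 2) * ∑ k : Fin n,
      t k * ((Lᵀ * Dmat n s * L) (Sum.inl k) (Sum.inl k)
        + (Lᵀ * Dmat n s * L) (Sum.inr k) (Sum.inr k))) = -(1 / 2) * D from hval.symm]
  refine Tendsto.congr' ?_ hslope'
  filter_upwards [eventually_mem_nhdsWithin] with α hα
  exact (hcong α hα).symm
end

section
/- Let n ≥ 1, let s, t : Fin n → ℝ with sₖ > 0 and tₖ > 0 for all k, and let L be a real symplectic 2n×2n matrix (Lᵀ J L = J). Then the function α ↦ (1/(2(1-α)))·Tr(D((1-α)·t)⁻¹ · Lᵀ·D(α·s)·L) tends, as α → 1 from the left, to (1/2)·∑ₖ tₖ·[(Lᵀ·D(s)·L)ₖₖ + (Lᵀ·D(s)·L)_{n+k,n+k}]. -/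
open Matrix Filter
open scoped Topology

private lemma half_coth_mul {x : ℝ} (hx : x ≠ 0) :
    (1 / 2) * coth x * (2 * Real.tanh x) = 1 := by
  have h1 : Real.sinh x ≠ 0 := Real.sinh_ne_zero.mpr hx
  have h2 : Real.cosh x ≠ 0 := (Real.cosh_pos x).ne'
  rw [coth, Real.tanh_eq_sinh_div_cosh]
  field_simp

private lemma Dmat_inv_eq (n : ℕ) (r : Fin n → ℝ) (hr : ∀ k, 0 < r k) :
    (Dmat n r)⁻¹ = Matrix.diagonal
      (Sum.elim (fun k => 2 * Real.tanh (r k / 2)) (fun k => 2 * Real.tanh (r k / 2))) := by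
  apply Matrix.inv_eq_right_inv
  rw [Dmat, Matrix.diagonal_mul_diagonal, ← Matrix.diagonal_one]
  refine congrArg Matrix.diagonal (funext fun i => ?_)
  cases i with
  | inl k => exact half_coth_mul (ne_of_gt (half_pos (hr k)))
  | inr k => exact half_coth_mul (ne_of_gt (half_pos (hr k)))

example : True := trivial
private lemma trace_diagonal_mul {m : Type*} [Fintype m] [DecidableEq m]
    (d : m → ℝ) (M : Matrix m m ℝ) :
    (Matrix.diagonal d * M).trace = ∑ i, d i * M i i := by
  simp [Matrix.trace, Matrix.diag, Matrix.diagonal_mul]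

private lemma tanh_div_tendsto (c : ℝ) :
    Tendsto (fun x : ℝ => Real.tanh (x * c / 2) / x) (𝓝[≠] (0:ℝ)) (𝓝 (c / 2)) := by
  have htanh : HasDerivAt Real.tanh 1 0 := by
    have h : HasDerivAt (fun y : ℝ => Real.sinh y / Real.cosh y)
        ((Real.cosh 0 * Real.cosh 0 - Real.sinh 0 * Real.sinh 0) / Real.cosh 0 ^ 2) 0 :=
      (Real.hasDerivAt_sinh 0).div (Real.hasDerivAt_cosh 0) (Real.cosh_pos 0).ne'
    have h2 : (fun y : ℝ => Real.sinh y / Real.cosh y) = Real.tanh :=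
      funext fun y => (Real.tanh_eq_sinh_div_cosh y).symm
    rw [h2] at h
    simpa using h
  have hu : HasDerivAt (fun x : ℝ => x * c / 2) (c / 2) 0 := by
    simpa using ((hasDerivAt_id (0:ℝ)).mul_const c).div_const 2
  have hf : HasDerivAt (fun x : ℝ => Real.tanh (x * c / 2)) (c / 2) 0 := by
    have h0 : HasDerivAt Real.tanh 1 ((0:ℝ) * c / 2) := by simpa using htanh
    simpa [Function.comp_def] using h0.comp 0 hu
  have := hasDerivAt_iff_tendsto_slope.mp hf
  refine this.congr fun x => ?_
  simp [slope_def_field]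

private lemma keyA (c : ℝ) :
    Tendsto (fun α : ℝ => Real.tanh ((1 - α) * c / 2) / (1 - α))
      (𝓝[Set.Ioo (0:ℝ) 1] 1) (𝓝 (c / 2)) := by
  have h1 : Tendsto (fun α : ℝ => 1 - α) (𝓝[Set.Ioo (0:ℝ) 1] 1) (𝓝[≠] (0:ℝ)) := by
    apply tendsto_nhdsWithin_of_tendsto_nhds_of_eventually_within
    · have : Tendsto (fun α : ℝ => 1 - α) (𝓝 1) (𝓝 (1 - 1)) :=
        (continuous_const.sub continuous_id).tendsto 1
      simpa using this.mono_left nhdsWithin_le_nhds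
    · filter_upwards [self_mem_nhdsWithin] with α hα
      exact (sub_pos.mpr hα.2).ne'
  exact (tanh_div_tendsto c).comp h1

private lemma entry_eq (n : ℕ) (s : Fin n → ℝ)
    (L : Matrix (Fin n ⊕ Fin n) (Fin n ⊕ Fin n) ℝ) (α : ℝ) (i j : Fin n ⊕ Fin n) :
    (Lᵀ * Dmat n (α • s) * L) i j
      = ∑ p, Lᵀ i p *
          Sum.elim (fun k => (1/2) * coth (α * s k / 2))
            (fun k => (1/2) * coth (α * s k / 2)) p * L p j := by
  rw [Dmat, Matrix.mul_apply]
  refine Finset.sum_congr rfl fun p _ => ?_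
  rw [Matrix.mul_diagonal]
  rcases p with k | k <;> simp [smul_eq_mul]

private lemma keyB (n : ℕ) (s : Fin n → ℝ) (hs : ∀ k, 0 < s k)
    (L : Matrix (Fin n ⊕ Fin n) (Fin n ⊕ Fin n) ℝ) (i j : Fin n ⊕ Fin n) :
    Tendsto (fun α : ℝ => (Lᵀ * Dmat n (α • s) * L) i j) (𝓝 1)
      (𝓝 ((Lᵀ * Dmat n s * L) i j)) := by
  have hc : ∀ k : Fin n, Tendsto (fun α : ℝ => coth (α * s k / 2)) (𝓝 1)
      (𝓝 (coth (s k / 2))) := by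
    intro k
    have hcont : ContinuousAt (fun y : ℝ => coth y) (s k / 2) := by
      have hne : Real.sinh (s k / 2) ≠ 0 :=
        Real.sinh_ne_zero.mpr (half_pos (hs k)).ne'
      exact (Real.continuous_cosh.continuousAt).div (Real.continuous_sinh.continuousAt) hne
    have hlin : ContinuousAt (fun α : ℝ => α * s k / 2) 1 := by fun_prop
    have h1 : s k / 2 = (1:ℝ) * s k / 2 := by ring
    rw [h1] at hcont
    have := ContinuousAt.comp (f := fun α : ℝ => α * s k / 2) (x := 1) hcont hlin
    simpa [ContinuousAt, Function.comp_def] using this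
  have h1 : (Lᵀ * Dmat n s * L) i j
      = ∑ p, Lᵀ i p *
          Sum.elim (fun k => (1/2) * coth (s k / 2))
            (fun k => (1/2) * coth (s k / 2)) p * L p j := by
    have := entry_eq n s L 1 i j
    simpa using this
  rw [h1]
  have h2 : ∀ α : ℝ, (Lᵀ * Dmat n (α • s) * L) i j
      = ∑ p, Lᵀ i p *
          Sum.elim (fun k => (1/2) * coth (α * s k / 2))
            (fun k => (1/2) * coth (α * s k / 2)) p * L p j :=
    fun α => entry_eq n s L α i j
  simp only [h2]
  apply tendsto_finset_sum
  intro p _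
  rcases p with k | k
  · exact (tendsto_const_nhds.mul (tendsto_const_nhds.mul (hc k))).mul tendsto_const_nhds
  · exact (tendsto_const_nhds.mul (tendsto_const_nhds.mul (hc k))).mul tendsto_const_nhds

/-- For `sₖ, tₖ > 0` and `L` symplectic,
`(1/(2(1-α)))·Tr(D((1-α)t)⁻¹ Lᵀ D(αs) L)` tends, as `α → 1⁻`, to
`(1/2)·∑ₖ tₖ [(Lᵀ D(s) L)ₖₖ + (Lᵀ D(s) L)_{n+k,n+k}]`. -/
theorem petz_renyi_RIV_trace_limit (n : ℕ) (hn : 1 ≤ n)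
    (s t : Fin n → ℝ) (hs : ∀ k, 0 < s k) (ht : ∀ k, 0 < t k)
    (L : Matrix (Fin n ⊕ Fin n) (Fin n ⊕ Fin n) ℝ)
    (hL : Lᵀ * symplecticJ n * L = symplecticJ n) :
    Tendsto
      (fun α : ℝ =>
        (1 / (2 * (1 - α))) *
          ((Dmat n ((1 - α) • t))⁻¹ * (Lᵀ * Dmat n (α • s) * L)).trace)
      (nhdsWithin 1 (Set.Ioo (0 : ℝ) 1))
      (nhds ((1 / 2) * ∑ k : Fin n,
        t k * ((Lᵀ * Dmat n s * L) (Sum.inl k) (Sum.inl k)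
          + (Lᵀ * Dmat n s * L) (Sum.inr k) (Sum.inr k)))) := by
  set M : ℝ → Matrix (Fin n ⊕ Fin n) (Fin n ⊕ Fin n) ℝ :=
    fun α => Lᵀ * Dmat n (α • s) * L with hM
  have key : ∀ α ∈ Set.Ioo (0:ℝ) 1,
      (1 / (2 * (1 - α))) * ((Dmat n ((1 - α) • t))⁻¹ * M α).trace
        = ∑ k : Fin n, (Real.tanh ((1 - α) * t k / 2) / (1 - α)) *
            (M α (Sum.inl k) (Sum.inl k) + M α (Sum.inr k) (Sum.inr k)) := by
    intro α hα
    have hpos : ∀ k, 0 < ((1 - α) • t) k := fun k => by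
      have := sub_pos.mpr hα.2
      simpa [smul_eq_mul] using mul_pos this (ht k)
    rw [Dmat_inv_eq n _ hpos, trace_diagonal_mul, Fintype.sum_sum_type]
    have hne : (1 - α) ≠ 0 := (sub_pos.mpr hα.2).ne'
    rw [mul_add, Finset.mul_sum, Finset.mul_sum, ← Finset.sum_add_distrib]
    refine Finset.sum_congr rfl fun k _ => ?_
    simp only [Sum.elim_inl, Sum.elim_inr, Pi.smul_apply, smul_eq_mul]
    field_simp
  have hlim : Tendsto
      (fun α : ℝ => ∑ k : Fin n, (Real.tanh ((1 - α) * t k / 2) / (1 - α)) *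
          (M α (Sum.inl k) (Sum.inl k) + M α (Sum.inr k) (Sum.inr k)))
      (𝓝[Set.Ioo (0:ℝ) 1] 1)
      (𝓝 ((1 / 2) * ∑ k : Fin n,
        t k * ((Lᵀ * Dmat n s * L) (Sum.inl k) (Sum.inl k)
          + (Lᵀ * Dmat n s * L) (Sum.inr k) (Sum.inr k)))) := by
    have hgoal : (1 / 2) * ∑ k : Fin n,
        t k * ((Lᵀ * Dmat n s * L) (Sum.inl k) (Sum.inl k)
          + (Lᵀ * Dmat n s * L) (Sum.inr k) (Sum.inr k))
        = ∑ k : Fin n, (t k / 2) *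
            ((Lᵀ * Dmat n s * L) (Sum.inl k) (Sum.inl k)
          + (Lᵀ * Dmat n s * L) (Sum.inr k) (Sum.inr k)) := by
      rw [Finset.mul_sum]; refine Finset.sum_congr rfl fun k _ => by ring
    rw [hgoal]
    apply tendsto_finset_sum
    intro k _
    exact (keyA (t k)).mul
      (((keyB n s hs L (Sum.inl k) (Sum.inl k)).add
        (keyB n s hs L (Sum.inr k) (Sum.inr k))).mono_left nhdsWithin_le_nhds)
  refine hlim.congr' ?_
  filter_upwards [self_mem_nhdsWithin] with α hα
  exact (key α hα).symm
end

section
/- Let n ≥ 1, let s, t : Fin n → ℝ with sₖ > 0 and tₖ > 0 for all k, let L be a real symplectic 2n×2n matrix (Lᵀ J L = J), and let m̃ ∈ ℝ^{2n}. For α ∈ (0,1) define R^I(α) = -(1/(1-α))·∑ₖ [α·log(1-e^{-sₖ}) - log(1-e^{-α·sₖ})], R^{II}(α) = ∑ₖ [-log(1-e^{-tₖ}) + (1/(1-α))·log(1-e^{-tₖ(1-α)})], R^{III}(α) = (1/(1-α))·m̃ᵀ·(Lᵀ·D(α·s)·L + D((1-α)·t))⁻¹·m̃, and R^{IV}(α)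 = (1/(2(1-α)))·log det(Lᵀ·D(α·s)·L + D((1-α)·t)). Then R^I(α) + R^{II}(α) + R^{III}(α) + R^{IV}(α) tends, as α → 1 from the left, to ∑ₖ [ -H(e^{-sₖ})/(1-e^{-sₖ}) - log(1-e^{-tₖ}) + (tₖ/2)·( (Lᵀ·D(s)·L)ₖₖ + (Lᵀ·D(s)·L)_{n+k,n+k} + 2·(m̃ₖ² + m̃_{n+k}²) - 1 ) ]. -/
open Matrix Filter
open scoped Topology

set_option maxHeartbeats 1000000

noncomputable def cf (x : ℝ) : ℝ := (1 / 2) * coth (x / 2)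

noncomputable def ef (x : ℝ) : ℝ := 2 * (1 - Real.exp (-x)) / (1 + Real.exp (-x))

lemma exp_neg_lt_one {x : ℝ} (hx : 0 < x) : Real.exp (-x) < 1 := by
  rw [Real.exp_lt_one_iff]; linarith

lemma cf_pos {x : ℝ} (hx : 0 < x) : 0 < cf x := by
  have h1 : 0 < Real.sinh (x / 2) := Real.sinh_pos_iff.mpr (by linarith)
  have h2 : 0 < Real.cosh (x / 2) := Real.cosh_pos _
  unfold cf coth
  positivity

lemma exp_neg_eq_sq (x : ℝ) : Real.exp (-x) = Real.exp (-(x/2)) * Real.exp (-(x/2)) := by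
  rw [← Real.exp_add]; ring_nf

lemma coth_half {x : ℝ} (hx : 0 < x) :
    coth (x / 2) = (1 + Real.exp (-x)) / (1 - Real.exp (-x)) := by
  rw [coth, Real.cosh_eq, Real.sinh_eq, exp_neg_eq_sq x]
  set a := Real.exp (x/2) with ha
  set b := Real.exp (-(x/2)) with hb
  have hab : a * b = 1 := by rw [ha, hb, ← Real.exp_add]; simp
  have ha1 : 1 < a := by rw [ha]; exact Real.one_lt_exp_iff.mpr (by linarith)
  have hb1 : b < 1 := by rw [hb]; exact exp_neg_lt_one (by linarith)
  have hb0 : 0 < b := Real.exp_pos _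
  have h1 : a - b ≠ 0 := by nlinarith
  have h2 : 1 - b * b ≠ 0 := by nlinarith
  rw [div_eq_div_iff (div_ne_zero h1 two_ne_zero) h2]
  linear_combination (-b) * hab

lemma cf_eq {x : ℝ} (hx : 0 < x) :
    cf x = (1 + Real.exp (-x)) / (2 * (1 - Real.exp (-x))) := by
  have hne : (1:ℝ) - Real.exp (-x) ≠ 0 := by nlinarith [exp_neg_lt_one hx]
  rw [cf, coth_half hx]
  field_simp

lemma cf_mul_ef {x : ℝ} (hx : 0 < x) : cf x * ef x = 1 := by
  have h1 : Real.exp (-x) < 1 := exp_neg_lt_one hx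
  have h2 : (0:ℝ) < 1 + Real.exp (-x) := by positivity
  have hne : (1:ℝ) - Real.exp (-x) ≠ 0 := by nlinarith
  rw [cf_eq hx, ef]
  field_simp

lemma ef_pos {x : ℝ} (hx : 0 < x) : 0 < ef x := by
  have h := exp_neg_lt_one hx
  have h2 : (0:ℝ) < 1 + Real.exp (-x) := by positivity
  have h3 : (0:ℝ) < 1 - Real.exp (-x) := by linarith
  rw [ef]; positivity

lemma ef_zero : ef 0 = 0 := by simp [ef]

lemma one_sub_mul_cf {x : ℝ} (hx : 0 < x) :
    (1 - Real.exp (-x)) * cf x = (1 + Real.exp (-x)) / 2 := by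
  have h1 : Real.exp (-x) < 1 := exp_neg_lt_one hx
  have hne : (1:ℝ) - Real.exp (-x) ≠ 0 := by nlinarith
  rw [cf_eq hx]
  field_simp

lemma log_one_sub_add_log_cf {x : ℝ} (hx : 0 < x) :
    Real.log (1 - Real.exp (-x)) + Real.log (cf x)
      = Real.log ((1 + Real.exp (-x)) / 2) := by
  rw [← Real.log_mul (by nlinarith [exp_neg_lt_one hx]) (ne_of_gt (cf_pos hx)),
    one_sub_mul_cf hx]

/-- derivative of `α ↦ exp (-((1-α)*c))` at `1` is `c`. -/
lemma hasDerivAt_exp_comp (c : ℝ) :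
    HasDerivAt (fun α : ℝ => Real.exp (-((1-α)*c))) c 1 := by
  have h1 : HasDerivAt (fun α : ℝ => -((1-α)*c)) c 1 := by
    have h := ((hasDerivAt_id (1:ℝ)).mul_const c).sub_const c
    simp only [id_eq] at h
    have hfun : (fun α : ℝ => α * c - c) = fun α : ℝ => -((1-α)*c) := by
      funext x; ring
    rw [hfun] at h
    simpa using h
  have h2 := (Real.hasDerivAt_exp (-((1-(1:ℝ))*c))).comp 1 h1
  simpa [Function.comp_def] using h2

/-- derivative of `α ↦ ef ((1-α)*c)` at `1` is `-c`. -/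
lemma hasDerivAt_ef_comp (c : ℝ) :
    HasDerivAt (fun α : ℝ => ef ((1-α)*c)) (-c) 1 := by
  have hexp := hasDerivAt_exp_comp c
  have hnum : HasDerivAt (fun α : ℝ => 2 * (1 - Real.exp (-((1-α)*c)))) (-(2*c)) 1 := by
    have := ((hexp.const_sub 1).const_mul 2)
    simpa using this
  have hden : HasDerivAt (fun α : ℝ => 1 + Real.exp (-((1-α)*c))) c 1 := by
    simpa using hexp.const_add 1
  have hdz : (1 : ℝ) + Real.exp (-((1-(1:ℝ))*c)) ≠ 0 := by
    positivity
  have h := hnum.fun_div hden hdz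
  have : (fun α : ℝ => 2 * (1 - Real.exp (-((1-α)*c))) / (1 + Real.exp (-((1-α)*c))))
      = fun α : ℝ => ef ((1-α)*c) := by
    funext x; rw [ef]
  rw [this] at h
  refine h.congr_deriv ?_
  norm_num [Real.exp_zero]
  ring

/-- Slope convergence: if `q` has derivative `q'` at `1` and `q 1 = 0`, then
`q α / (α - 1) → q'` as `α → 1` within `Ioo 0 1`. -/
lemma tendsto_div_sub_one {q : ℝ → ℝ} {q' : ℝ} (hq : HasDerivAt q q' 1) (h0 : q 1 = 0) :
    Tendsto (fun α => q α / (α - 1)) (nhdsWithin 1 (Set.Ioo (0:ℝ) 1)) (nhds q') := by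
  have h := hasDerivAt_iff_tendsto_slope.mp hq
  have h2 : Tendsto (slope q 1) (nhdsWithin 1 (Set.Ioo (0:ℝ) 1)) (nhds q') :=
    h.mono_left (nhdsWithin_mono _ (fun x hx => ne_of_lt hx.2))
  refine h2.congr fun α => ?_
  rw [slope_def_field, h0, sub_zero]

/-- Differentiability of `α ↦ cf (α * c)` at `1` for `c > 0`. -/
lemma differentiableAt_cf_comp {c : ℝ} (hc : 0 < c) :
    DifferentiableAt ℝ (fun α : ℝ => cf (α * c)) 1 := by
  have hsinh : Real.sinh ((1:ℝ) * c / 2) ≠ 0 := by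
    rw [one_mul]
    exact ne_of_gt (Real.sinh_pos_iff.mpr (by linarith))
  have hin : DifferentiableAt ℝ (fun α : ℝ => α * c / 2) 1 :=
    (differentiableAt_id.mul_const c).div_const 2
  have hch : DifferentiableAt ℝ (fun α : ℝ => Real.cosh (α * c / 2)) 1 :=
    Real.differentiable_cosh.differentiableAt.comp 1 hin
  have hsh : DifferentiableAt ℝ (fun α : ℝ => Real.sinh (α * c / 2)) 1 :=
    Real.differentiable_sinh.differentiableAt.comp 1 hin
  have : DifferentiableAt ℝ (fun α : ℝ => (1/2) * (Real.cosh (α * c / 2) / Real.sinh (α * c / 2))) 1 :=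
    ((hch.div hsh hsinh).const_mul _)
  exact this.congr_of_eventuallyEq (by filter_upwards with x; rw [cf, coth])

/-- If `σ ≠ 1`, then for every `i` there is `j ≠ i` with `σ j ≠ j`. -/
lemma perm_exists_ne {ι : Type*} [DecidableEq ι] (σ : Equiv.Perm ι) (hσ : σ ≠ 1) (i : ι) :
    ∃ j, j ≠ i ∧ σ j ≠ j := by
  obtain ⟨j, hj⟩ : ∃ j, σ j ≠ j := by
    by_contra h
    push_neg at h
    exact hσ (Equiv.ext fun x => h x)
  by_cases hji : j = i
  · subst hji
    refine ⟨σ j, fun h => hj h, fun h => hj (σ.injective h)⟩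
  · exact ⟨j, hji, hj⟩

/-- Derivative of the determinant of a matrix path through the identity. -/
lemma hasDerivAt_det_one {ι : Type*} [Fintype ι] [DecidableEq ι]
    {Bf : ℝ → Matrix ι ι ℝ} {B' : Matrix ι ι ℝ}
    (h : ∀ i j, HasDerivAt (fun α => Bf α i j) (B' i j) 1) (h1 : Bf 1 = 1) :
    HasDerivAt (fun α => (Bf α).det) (∑ i, B' i i) 1 := by
  have key : HasDerivAt
      (fun α => ∑ σ : Equiv.Perm ι, ((Equiv.Perm.sign σ : ℤ) : ℝ) * ∏ i, Bf α (σ i) i)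
      (∑ σ : Equiv.Perm ι, ((Equiv.Perm.sign σ : ℤ) : ℝ) *
        (∑ i, (∏ j ∈ Finset.univ.erase i, Bf 1 (σ j) j) • B' (σ i) i)) 1 := by
    apply HasDerivAt.fun_sum
    intro σ _
    exact (HasDerivAt.fun_finset_prod (fun i _ => h (σ i) i)).const_mul _
  have hval : (∑ σ : Equiv.Perm ι, ((Equiv.Perm.sign σ : ℤ) : ℝ) *
        (∑ i, (∏ j ∈ Finset.univ.erase i, Bf 1 (σ j) j) • B' (σ i) i)) = ∑ i, B' i i := by
    rw [Finset.sum_eq_single_of_mem (1 : Equiv.Perm ι) (Finset.mem_univ _)]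
    · simp only [Equiv.Perm.sign_one, Units.val_one, Int.cast_one, one_mul,
        Equiv.Perm.one_apply]
      refine Finset.sum_congr rfl fun i _ => ?_
      rw [Finset.prod_congr rfl (fun j _ => by rw [h1, Matrix.one_apply_eq]),
        Finset.prod_const_one, one_smul]
    · intro σ _ hσ
      rw [Finset.sum_eq_zero, mul_zero]
      intro i _
      obtain ⟨j, hji, hj⟩ := perm_exists_ne σ hσ i
      rw [Finset.prod_eq_zero (Finset.mem_erase.mpr ⟨hji, Finset.mem_univ _⟩)
        (by rw [h1]; exact Matrix.one_apply_ne hj), zero_smul]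
  rw [← hval]
  refine key.congr_of_eventuallyEq ?_
  filter_upwards with α
  rw [Matrix.det_apply']

lemma Dmat_eq (n : ℕ) (r : Fin n → ℝ) :
    Dmat n r = Matrix.diagonal (fun i => cf (Sum.elim r r i)) := by
  unfold Dmat cf
  congr 1
  funext i
  cases i <;> rfl

lemma Dmat_smul_eq (n : ℕ) (c : ℝ) (r : Fin n → ℝ) :
    Dmat n (c • r) = Matrix.diagonal (fun i => cf (c * Sum.elim r r i)) := by
  rw [Dmat_eq]
  have : (fun i => cf (Sum.elim (c • r) (c • r) i)) = fun i => cf (c * Sum.elim r r i) := by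
    funext i
    cases i <;> simp [Pi.smul_apply, smul_eq_mul]
  rw [this]

-- test: tendsto_pi_nhds on matrices
example {f : ℝ → Matrix (Fin 2) (Fin 2) ℝ} {A : Matrix (Fin 2) (Fin 2) ℝ} {l : Filter ℝ}
    (h : ∀ i j, Tendsto (fun x => f x i j) l (nhds (A i j))) : Tendsto f l (nhds A) := by
  refine tendsto_pi_nhds.2 fun i => ?_
  rw [tendsto_pi_nhds]
  exact h i

/-- Derivative of `α ↦ log (1 - exp (-(α c)))` at `1`. -/
lemma hasDerivAt_log_one_sub_exp {c : ℝ} (hc : 0 < c) :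
    HasDerivAt (fun α : ℝ => Real.log (1 - Real.exp (-(α * c))))
      (c * Real.exp (-c) / (1 - Real.exp (-c))) 1 := by
  have h1 : HasDerivAt (fun α : ℝ => -(α * c)) (-c) 1 := by
    exact (((hasDerivAt_id (1:ℝ)).mul_const c).neg).congr_deriv (by simp)
  have h2 := (Real.hasDerivAt_exp (-((1:ℝ) * c))).comp 1 h1
  have h3 : HasDerivAt (fun α : ℝ => 1 - Real.exp (-(α * c))) (c * Real.exp (-c)) 1 := by
    have := h2.const_sub 1
    simpa using this.congr_deriv (by rw [one_mul]; ring)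
  have hne : (1:ℝ) - Real.exp (-((1:ℝ) * c)) ≠ 0 := by
    rw [one_mul]
    nlinarith [exp_neg_lt_one hc]
  have h4 := (Real.hasDerivAt_log hne).comp 1 h3
  refine h4.congr_deriv ?_
  rw [one_mul]
  ring

/-- Derivative of `α ↦ log ((1 + exp (-(c (1-α))))/2)` at `1` is `c/2`. -/
lemma hasDerivAt_log_half (c : ℝ) :
    HasDerivAt (fun α : ℝ => Real.log ((1 + Real.exp (-(c * (1-α)))) / 2)) (c / 2) 1 := by
  have h1 : HasDerivAt (fun α : ℝ => (1 + Real.exp (-(c * (1-α)))) / 2) (c / 2) 1 := by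
    simp only [show ∀ x : ℝ, -(c * (1-x)) = -((1-x)*c) from fun x => by ring]
    exact (((hasDerivAt_exp_comp c).const_add 1).div_const 2)
  have hne : (1 + Real.exp (-(c * (1-(1:ℝ))))) / 2 ≠ 0 := by positivity
  have h2 := (Real.hasDerivAt_log hne).comp 1 h1
  refine h2.congr_deriv ?_
  norm_num

section Key

variable {n : ℕ} (s t : Fin n → ℝ)
variable (L : Matrix (Fin n ⊕ Fin n) (Fin n ⊕ Fin n) ℝ)
variable (mt : Fin n ⊕ Fin n → ℝ)

/-- abbreviations -/
noncomputable def Amat (α : ℝ) : Matrix (Fin n ⊕ Fin n) (Fin n ⊕ Fin n) ℝ :=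
  Lᵀ * Dmat n (α • s) * L

noncomputable def Emat (α : ℝ) : Matrix (Fin n ⊕ Fin n) (Fin n ⊕ Fin n) ℝ :=
  Matrix.diagonal (fun i => ef ((1 - α) * Sum.elim t t i))

lemma key_identity (hs : ∀ k, 0 < s k) (ht : ∀ k, 0 < t k)
    {α : ℝ} (hα0 : 0 < α) (hα1 : α < 1) :
    (-(1 / (1 - α)) * ∑ k : Fin n,
        (α * Real.log (1 - Real.exp (-s k)) - Real.log (1 - Real.exp (-(α * s k)))))
    + (∑ k : Fin n,
        (-Real.log (1 - Real.exp (-t k))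
          + (1 / (1 - α)) * Real.log (1 - Real.exp (-(t k * (1 - α))))))
    + ((1 / (1 - α)) *
        (mt ⬝ᵥ (Lᵀ * Dmat n (α • s) * L + Dmat n ((1 - α) • t))⁻¹ *ᵥ mt))
    + ((1 / (2 * (1 - α))) *
        Real.log ((Lᵀ * Dmat n (α • s) * L + Dmat n ((1 - α) • t)).det))
    =
    (∑ k : Fin n, -Real.log (1 - Real.exp (-t k)))
    + (∑ k : Fin n,
        (α * Real.log (1 - Real.exp (-s k)) - Real.log (1 - Real.exp (-(α * s k))))) / (α - 1)
    + (-∑ k : Fin n, Real.log ((1 + Real.exp (-(t k * (1 - α)))) / 2)) / (α - 1)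
    + (-(1/2) * Real.log ((1 + Emat t α * Amat s L α).det)) / (α - 1)
    + (mt ⬝ᵥ (((1 - α)⁻¹ • Emat t α) * (1 + Amat s L α * Emat t α).adjugate) *ᵥ mt)
        / (1 + Amat s L α * Emat t α).det := by
  classical
  have hε : 0 < 1 - α := by linarith
  have hne : (1:ℝ) - α ≠ 0 := ne_of_gt hε
  have hne' : α - 1 ≠ 0 := by intro h; apply hne; linarith
  set T : Fin n ⊕ Fin n → ℝ := Sum.elim t t with hT
  set S : Fin n ⊕ Fin n → ℝ := Sum.elim s s with hS
  have hTpos : ∀ i, 0 < T i := by rintro (k | k) <;> exact ht k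
  have hSpos : ∀ i, 0 < S i := by rintro (k | k) <;> exact hs k
  set A := Amat s L α with hA
  set E := Emat t α with hE
  set D := Dmat n ((1 - α) • t) with hDd
  set C := 1 + A * E with hC
  set B := 1 + E * A with hB
  have hD : D = Matrix.diagonal (fun i => cf ((1 - α) * T i)) := Dmat_smul_eq n (1-α) t
  have hcfpos : ∀ i, 0 < cf ((1 - α) * T i) := fun i => cf_pos (mul_pos hε (hTpos i))
  have hefpos : ∀ i, 0 < ef ((1 - α) * T i) := fun i => ef_pos (mul_pos hε (hTpos i))
  have hDE : D * E = 1 := by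
    rw [hD, hE, Emat, Matrix.diagonal_mul_diagonal]
    rw [show (fun i => cf ((1-α) * T i) * ef ((1-α) * T i)) = fun _ => (1:ℝ) from
      funext fun i => cf_mul_ef (mul_pos hε (hTpos i))]
    exact Matrix.diagonal_one
  have hED : E * D = 1 := by
    rw [hD, hE, Emat, Matrix.diagonal_mul_diagonal]
    rw [show (fun i => ef ((1-α) * T i) * cf ((1-α) * T i)) = fun _ => (1:ℝ) from
      funext fun i => by rw [mul_comm]; exact cf_mul_ef (mul_pos hε (hTpos i))]
    exact Matrix.diagonal_one
  -- positive definiteness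
  have hPD_P : (Dmat n (α • s)).PosDef := by
    rw [Dmat_smul_eq]
    exact Matrix.PosDef.diagonal fun i => cf_pos (mul_pos hα0 (hSpos i))
  have hApsd : A.PosSemidef := by
    rw [hA, Amat, ← Matrix.conjTranspose_eq_transpose_of_trivial]
    exact hPD_P.posSemidef.conjTranspose_mul_mul_same L
  have hDPD : D.PosDef := by rw [hD]; exact Matrix.PosDef.diagonal hcfpos
  set M := A + D with hM
  have hMPD : M.PosDef := Matrix.PosDef.posSemidef_add hApsd hDPD
  have hMdet : 0 < M.det := hMPD.det_pos
  -- determinant identities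
  have hDB : D * B = M := by
    rw [hB, mul_add, mul_one, ← Matrix.mul_assoc, hDE, one_mul, hM, add_comm]
  have hCD : C * D = M := by
    rw [hC, add_mul, one_mul, Matrix.mul_assoc, hED, mul_one, hM, add_comm]
  have hdetD : D.det = ∏ i, cf ((1 - α) * T i) := by rw [hD, Matrix.det_diagonal]
  have hdetDpos : 0 < D.det := by rw [hdetD]; exact Finset.prod_pos fun i _ => hcfpos i
  have hdetDB : D.det * B.det = M.det := by rw [← Matrix.det_mul, hDB]
  have hdetBpos : 0 < B.det := by nlinarith
  have hdetE : E.det = ∏ i, ef ((1 - α) * T i) := by rw [hE, Emat, Matrix.det_diagonal]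
  have hdetEpos : 0 < E.det := by rw [hdetE]; exact Finset.prod_pos fun i _ => hefpos i
  have hCE : C = M * E := by
    rw [hM, add_mul, hDE, hC, add_comm]
  have hdetCpos : 0 < C.det := by rw [hCE, Matrix.det_mul]; exact mul_pos hMdet hdetEpos
  -- log of det M
  have hlogM : Real.log M.det
      = ((∑ k : Fin n, Real.log (cf ((1 - α) * t k)))
          + ∑ k : Fin n, Real.log (cf ((1 - α) * t k))) + Real.log B.det := by
    rw [← hdetDB, Real.log_mul (ne_of_gt hdetDpos) (ne_of_gt hdetBpos), hdetD,
      Real.log_prod (fun i _ => ne_of_gt (hcfpos i)), Fintype.sum_sum_type]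
    rfl
  -- inverse of M
  have hInvD : D⁻¹ = E := Matrix.inv_eq_left_inv hED
  have hMinv : M⁻¹ = (C.det)⁻¹ • (E * C.adjugate) := by
    rw [← hCD, Matrix.mul_inv_rev, hInvD, Matrix.inv_def, Ring.inverse_eq_inv,
      Matrix.mul_smul]
  -- now the scalar computation
  rw [show Lᵀ * Dmat n (α • s) * L + Dmat n ((1 - α) • t) = M from rfl]
  rw [hMinv, hlogM]
  -- pull scalars out of the dot products
  rw [Matrix.smul_mulVec, dotProduct_smul, Matrix.smul_mul, Matrix.smul_mulVec,
    dotProduct_smul]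
  -- split the second sum
  rw [Finset.sum_add_distrib, ← Finset.mul_sum]
  -- identity between the log sums
  have hq2sum : ∑ k : Fin n, Real.log ((1 + Real.exp (-(t k * (1 - α)))) / 2)
      = (∑ k : Fin n, Real.log (1 - Real.exp (-(t k * (1 - α)))))
        + ∑ k : Fin n, Real.log (cf ((1 - α) * t k)) := by
    rw [← Finset.sum_add_distrib]
    refine Finset.sum_congr rfl fun k _ => ?_
    rw [show (1 - α) * t k = t k * (1 - α) from mul_comm _ _]
    exact (log_one_sub_add_log_cf (mul_pos (ht k) hε)).symm
  rw [hq2sum]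
  generalize (∑ k : Fin n,
      (α * Real.log (1 - Real.exp (-s k)) - Real.log (1 - Real.exp (-(α * s k))))) = X1
  generalize (∑ k : Fin n, Real.log (1 - Real.exp (-(t k * (1 - α))))) = X2
  generalize (∑ k : Fin n, Real.log (cf ((1 - α) * t k))) = X3
  generalize (∑ k : Fin n, -Real.log (1 - Real.exp (-t k))) = X4
  generalize Real.log B.det = X5
  generalize (mt ⬝ᵥ (E * C.adjugate) *ᵥ mt) = X6
  have hdC : C.det ≠ 0 := ne_of_gt hdetCpos
  field_simp
  linear_combination (2*X6*(α-1)) * mul_inv_cancel₀ hdC - (2*X6*(α-1)) * mul_inv_cancel₀ hne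
end Key

section Main

variable {n : ℕ} (s t : Fin n → ℝ)
variable (L : Matrix (Fin n ⊕ Fin n) (Fin n ⊕ Fin n) ℝ)
variable (mt : Fin n ⊕ Fin n → ℝ)

lemma hAm_apply (α : ℝ) (i j : Fin n ⊕ Fin n) :
    Amat s L α i j = ∑ q, L q i * (cf (α * Sum.elim s s q) * L q j) := by
  rw [Amat, Dmat_smul_eq, Matrix.mul_assoc, Matrix.mul_apply]
  exact Finset.sum_congr rfl fun q _ => by
    rw [Matrix.diagonal_mul, Matrix.transpose_apply]

lemma hAmdiff (hs : ∀ k, 0 < s k) (i j : Fin n ⊕ Fin n) :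
    DifferentiableAt ℝ (fun α => Amat s L α i j) 1 := by
  have hSpos : ∀ q : Fin n ⊕ Fin n, 0 < Sum.elim s s q := by rintro (k | k) <;> exact hs k
  have : (fun α => Amat s L α i j)
      = fun α => ∑ q, L q i * (cf (α * Sum.elim s s q) * L q j) := by
    funext α; exact hAm_apply s L α i j
  rw [this]
  apply DifferentiableAt.fun_sum
  intro q _
  exact (differentiableAt_const _).mul
    ((differentiableAt_cf_comp (hSpos q)).mul (differentiableAt_const _))

lemma hEm1 : Emat t 1 = 0 := by
  rw [Emat]
  have : (fun i => ef ((1 - (1:ℝ)) * Sum.elim t t i)) = fun _ => (0:ℝ) := by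
    funext i; norm_num [ef_zero]
  rw [this, Matrix.diagonal_zero]

lemma hBm1 : (1 + Emat t 1 * Amat s L 1) = 1 := by
  rw [hEm1, zero_mul, add_zero]

lemma hBder (hs : ∀ k, 0 < s k) (i j : Fin n ⊕ Fin n) :
    HasDerivAt (fun α => (1 + Emat t α * Amat s L α) i j)
      ((Matrix.of fun i j => -(Sum.elim t t i) * Amat s L 1 i j) i j) 1 := by
  have hent : ∀ α : ℝ, (1 + Emat t α * Amat s L α) i j
      = (1 : Matrix (Fin n ⊕ Fin n) (Fin n ⊕ Fin n) ℝ) i j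
        + ef ((1 - α) * Sum.elim t t i) * Amat s L α i j := fun α => by
    rw [Matrix.add_apply, Emat, Matrix.diagonal_mul]
  simp only [hent]
  have h := ((hasDerivAt_ef_comp (Sum.elim t t i)).mul
    (hAmdiff s L hs i j).hasDerivAt).const_add
    ((1 : Matrix (Fin n ⊕ Fin n) (Fin n ⊕ Fin n) ℝ) i j)
  refine h.congr_deriv ?_
  simp [ef_zero]

lemma hq4deriv (hs : ∀ k, 0 < s k) :
    HasDerivAt (fun α => -(1/2) * Real.log ((1 + Emat t α * Amat s L α).det))
      ((1/2) * ∑ i, Sum.elim t t i * Amat s L 1 i i) 1 := by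
  have hdet : HasDerivAt (fun α => (1 + Emat t α * Amat s L α).det)
      (∑ i, (Matrix.of fun i j => -(Sum.elim t t i) * Amat s L 1 i j) i i) 1 :=
    hasDerivAt_det_one (hBder s t L hs) (hBm1 s t L)
  have hne : ((1 + Emat t 1 * Amat s L 1).det) ≠ 0 := by
    rw [hBm1, Matrix.det_one]; norm_num
  have hlog := (Real.hasDerivAt_log hne).comp 1 hdet
  have h := hlog.const_mul (-(1/2) : ℝ)
  refine h.congr_deriv ?_
  rw [hBm1, Matrix.det_one]
  simp only [Matrix.of_apply, neg_mul, Finset.sum_neg_distrib]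
  ring

lemma hCmT (hs : ∀ k, 0 < s k) :
    Tendsto (fun α => 1 + Amat s L α * Emat t α) (nhdsWithin 1 (Set.Ioo (0:ℝ) 1))
      (nhds (1 : Matrix (Fin n ⊕ Fin n) (Fin n ⊕ Fin n) ℝ)) := by
  refine tendsto_pi_nhds.2 fun i => ?_; refine tendsto_pi_nhds.2 fun j => ?_
  have hent : ∀ α : ℝ, (1 + Amat s L α * Emat t α) i j
      = (1 : Matrix (Fin n ⊕ Fin n) (Fin n ⊕ Fin n) ℝ) i j
        + Amat s L α i j * ef ((1 - α) * Sum.elim t t j) := fun α => by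
    rw [Matrix.add_apply, Emat, Matrix.mul_diagonal]
  simp only [hent]
  have h2 : Tendsto (fun α : ℝ => (1 : Matrix (Fin n ⊕ Fin n) (Fin n ⊕ Fin n) ℝ) i j
        + Amat s L α i j * ef ((1 - α) * Sum.elim t t j))
      (nhdsWithin 1 (Set.Ioo (0:ℝ) 1))
      (nhds ((1 : Matrix (Fin n ⊕ Fin n) (Fin n ⊕ Fin n) ℝ) i j
        + Amat s L 1 i j * ef ((1 - 1) * Sum.elim t t j))) :=
    tendsto_const_nhds.add
      ((((hAmdiff s L hs i j).continuousAt).tendsto.mono_left nhdsWithin_le_nhds).mul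
        (((hasDerivAt_ef_comp (Sum.elim t t j)).continuousAt).tendsto.mono_left
          nhdsWithin_le_nhds))
  convert h2 using 2
  simp [ef_zero]

lemma hPT :
    Tendsto (fun α => ((1 - α)⁻¹ • Emat t α)) (nhdsWithin 1 (Set.Ioo (0:ℝ) 1))
      (nhds (Matrix.diagonal (Sum.elim t t))) := by
  refine tendsto_pi_nhds.2 fun i => ?_; refine tendsto_pi_nhds.2 fun j => ?_
  by_cases hij : i = j
  · subst hij
    have hent : ∀ α : ℝ, ((1 - α)⁻¹ • Emat t α) i i
        = (1 - α)⁻¹ * ef ((1 - α) * Sum.elim t t i) := fun α => by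
      rw [Matrix.smul_apply, Emat, Matrix.diagonal_apply_eq, smul_eq_mul]
    simp only [hent, Matrix.diagonal_apply_eq]
    have h1 : Tendsto (fun α => (ef ((1 - α) * Sum.elim t t i)) / (α - 1))
        (nhdsWithin 1 (Set.Ioo (0:ℝ) 1)) (nhds (-(Sum.elim t t i))) :=
      tendsto_div_sub_one (hasDerivAt_ef_comp (Sum.elim t t i)) (by norm_num [ef_zero])
    have h2 := h1.neg
    rw [neg_neg] at h2
    refine h2.congr fun α => ?_
    rw [div_eq_mul_inv, mul_comm, ← neg_mul, neg_inv, neg_sub]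
  · have hent : ∀ α : ℝ, ((1 - α)⁻¹ • Emat t α) i j = 0 := fun α => by
      rw [Matrix.smul_apply, Emat, Matrix.diagonal_apply_ne _ hij, smul_zero]
    simp only [hent, Matrix.diagonal_apply_ne _ hij]
    exact tendsto_const_nhds

lemma hG3T (hs : ∀ k, 0 < s k) :
    Tendsto (fun α =>
        (mt ⬝ᵥ (((1 - α)⁻¹ • Emat t α) * (1 + Amat s L α * Emat t α).adjugate) *ᵥ mt)
          / (1 + Amat s L α * Emat t α).det)
      (nhdsWithin 1 (Set.Ioo (0:ℝ) 1))
      (nhds (∑ i, mt i * (Sum.elim t t i * mt i))) := by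
  have hφ : ContinuousAt
      (fun p : Matrix (Fin n ⊕ Fin n) (Fin n ⊕ Fin n) ℝ
          × Matrix (Fin n ⊕ Fin n) (Fin n ⊕ Fin n) ℝ =>
        (mt ⬝ᵥ (p.1 * p.2.adjugate) *ᵥ mt) / p.2.det)
      (Matrix.diagonal (Sum.elim t t), 1) := by
    apply ContinuousAt.div
    · exact (continuous_const.dotProduct
        (((continuous_fst.matrix_mul continuous_snd.matrix_adjugate)).matrix_mulVec
          continuous_const)).continuousAt
    · exact (continuous_snd.matrix_det).continuousAt
    · simp
  have h := hφ.tendsto.comp ((hPT t).prodMk_nhds (hCmT s t L hs))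
  have hval : (mt ⬝ᵥ (Matrix.diagonal (Sum.elim t t)
      * (1 : Matrix (Fin n ⊕ Fin n) (Fin n ⊕ Fin n) ℝ).adjugate) *ᵥ mt)
      / (1 : Matrix (Fin n ⊕ Fin n) (Fin n ⊕ Fin n) ℝ).det
      = ∑ i, mt i * (Sum.elim t t i * mt i) := by
    rw [Matrix.adjugate_one, mul_one, Matrix.det_one, div_one, dotProduct]
    refine Finset.sum_congr rfl fun i _ => ?_
    rw [Matrix.mulVec_diagonal]
  rw [← hval]
  exact h

end Main

/-- **Convergence of the Petz–Rényi relative entropy to the relative entropy.**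
With `R^I, R^{II}, R^{III}, R^{IV}` as in the paper, the sum
`R^I(α) + R^{II}(α) + R^{III}(α) + R^{IV}(α)` (which is `S_α(ρ||σ)`) tends, as `α → 1⁻`
within `(0,1)`, to the relative entropy
`∑ₖ [-H(e^{-sₖ})/(1-e^{-sₖ}) - log(1-e^{-tₖ})
      + (tₖ/2)((Lᵀ D(s) L)ₖₖ + (Lᵀ D(s) L)_{n+k,n+k} + 2(m̃ₖ² + m̃_{n+k}²) - 1)]`. -/
theorem petz_renyi_tendsto_relative_entropy (n : ℕ) (hn : 1 ≤ n)
    (s t : Fin n → ℝ) (hs : ∀ k, 0 < s k) (ht : ∀ k, 0 < t k)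
    (L : Matrix (Fin n ⊕ Fin n) (Fin n ⊕ Fin n) ℝ)
    (hL : Lᵀ * symplecticJ n * L = symplecticJ n)
    (mt : Fin n ⊕ Fin n → ℝ) :
    Tendsto
      (fun α : ℝ =>
        (-(1 / (1 - α)) * ∑ k : Fin n,
            (α * Real.log (1 - Real.exp (-s k)) - Real.log (1 - Real.exp (-(α * s k)))))
        + (∑ k : Fin n,
            (-Real.log (1 - Real.exp (-t k))
              + (1 / (1 - α)) * Real.log (1 - Real.exp (-(t k * (1 - α))))))
        + ((1 / (1 - α)) *
            (mt ⬝ᵥ (Lᵀ * Dmat n (α • s) * L + Dmat n ((1 - α) • t))⁻¹ *ᵥ mt))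
        + ((1 / (2 * (1 - α))) *
            Real.log ((Lᵀ * Dmat n (α • s) * L + Dmat n ((1 - α) • t)).det)))
      (nhdsWithin 1 (Set.Ioo (0 : ℝ) 1))
      (nhds (∑ k : Fin n,
        (-shannonH (Real.exp (-s k)) / (1 - Real.exp (-s k))
          - Real.log (1 - Real.exp (-t k))
          + (t k / 2) *
            ((Lᵀ * Dmat n s * L) (Sum.inl k) (Sum.inl k)
              + (Lᵀ * Dmat n s * L) (Sum.inr k) (Sum.inr k)
              + 2 * ((mt (Sum.inl k)) ^ 2 + (mt (Sum.inr k)) ^ 2) - 1)))) := by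
  classical
  have l1 : Tendsto (fun α : ℝ => (∑ k : Fin n,
        (α * Real.log (1 - Real.exp (-s k)) - Real.log (1 - Real.exp (-(α * s k))))) / (α - 1))
      (nhdsWithin 1 (Set.Ioo (0 : ℝ) 1))
      (nhds (∑ k : Fin n, (Real.log (1 - Real.exp (-s k))
        - s k * Real.exp (-s k) / (1 - Real.exp (-s k))))) := by
    apply tendsto_div_sub_one
    · apply HasDerivAt.fun_sum
      intro k _
      have h1 : HasDerivAt (fun α : ℝ => α * Real.log (1 - Real.exp (-s k)))
          (Real.log (1 - Real.exp (-s k))) 1 := by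
        simpa using (hasDerivAt_id (1:ℝ)).mul_const (Real.log (1 - Real.exp (-s k)))
      exact h1.sub (hasDerivAt_log_one_sub_exp (hs k))
    · simp
  have l2 : Tendsto (fun α : ℝ =>
        (-∑ k : Fin n, Real.log ((1 + Real.exp (-(t k * (1 - α)))) / 2)) / (α - 1))
      (nhdsWithin 1 (Set.Ioo (0 : ℝ) 1))
      (nhds (-∑ k : Fin n, t k / 2)) := by
    apply tendsto_div_sub_one
    · exact (HasDerivAt.fun_sum fun k _ => hasDerivAt_log_half (t k)).neg
    · norm_num
  have l4 : Tendsto (fun α : ℝ =>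
        (-(1/2) * Real.log ((1 + Emat t α * Amat s L α).det)) / (α - 1))
      (nhdsWithin 1 (Set.Ioo (0 : ℝ) 1))
      (nhds ((1/2) * ∑ i, Sum.elim t t i * Amat s L 1 i i)) := by
    apply tendsto_div_sub_one (hq4deriv s t L hs)
    rw [hBm1 s t L, Matrix.det_one, Real.log_one, mul_zero]
  have l3 := hG3T s t L mt hs
  have lC : Tendsto (fun _ : ℝ => ∑ k : Fin n, -Real.log (1 - Real.exp (-t k)))
      (nhdsWithin 1 (Set.Ioo (0 : ℝ) 1))
      (nhds (∑ k : Fin n, -Real.log (1 - Real.exp (-t k)))) := tendsto_const_nhds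
  have main := ((((lC.add l1).add l2).add l4).add l3)
  have heq : ∀ᶠ α in nhdsWithin 1 (Set.Ioo (0 : ℝ) 1),
      ((fun α : ℝ =>
        (∑ k : Fin n, -Real.log (1 - Real.exp (-t k)))
        + (∑ k : Fin n,
            (α * Real.log (1 - Real.exp (-s k)) - Real.log (1 - Real.exp (-(α * s k))))) / (α - 1)
        + (-∑ k : Fin n, Real.log ((1 + Real.exp (-(t k * (1 - α)))) / 2)) / (α - 1)
        + (-(1/2) * Real.log ((1 + Emat t α * Amat s L α).det)) / (α - 1)
        + (mt ⬝ᵥ (((1 - α)⁻¹ • Emat t α) * (1 + Amat s L α * Emat t α).adjugate) *ᵥ mt)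
            / (1 + Amat s L α * Emat t α).det) α)
      = (fun α : ℝ =>
        (-(1 / (1 - α)) * ∑ k : Fin n,
            (α * Real.log (1 - Real.exp (-s k)) - Real.log (1 - Real.exp (-(α * s k)))))
        + (∑ k : Fin n,
            (-Real.log (1 - Real.exp (-t k))
              + (1 / (1 - α)) * Real.log (1 - Real.exp (-(t k * (1 - α))))))
        + ((1 / (1 - α)) *
            (mt ⬝ᵥ (Lᵀ * Dmat n (α • s) * L + Dmat n ((1 - α) • t))⁻¹ *ᵥ mt))
        + ((1 / (2 * (1 - α))) *
            Real.log ((Lᵀ * Dmat n (α • s) * L + Dmat n ((1 - α) • t)).det))) α := by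
    filter_upwards [self_mem_nhdsWithin] with α hα
    exact (key_identity s t L mt hs ht hα.1 hα.2).symm
  have hVal : (∑ k : Fin n,
        (-shannonH (Real.exp (-s k)) / (1 - Real.exp (-s k))
          - Real.log (1 - Real.exp (-t k))
          + (t k / 2) *
            ((Lᵀ * Dmat n s * L) (Sum.inl k) (Sum.inl k)
              + (Lᵀ * Dmat n s * L) (Sum.inr k) (Sum.inr k)
              + 2 * ((mt (Sum.inl k)) ^ 2 + (mt (Sum.inr k)) ^ 2) - 1)))
      = (∑ k : Fin n, -Real.log (1 - Real.exp (-t k)))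
        + (∑ k : Fin n, (Real.log (1 - Real.exp (-s k))
            - s k * Real.exp (-s k) / (1 - Real.exp (-s k))))
        + (-∑ k : Fin n, t k / 2)
        + ((1/2) * ∑ i, Sum.elim t t i * Amat s L 1 i i)
        + (∑ i, mt i * (Sum.elim t t i * mt i)) := by
    have hA1 : Amat s L 1 = Lᵀ * Dmat n s * L := by rw [Amat, one_smul]
    rw [hA1, Fintype.sum_sum_type, Fintype.sum_sum_type]
    simp only [Sum.elim_inl, Sum.elim_inr]
    have hZ : ∀ k ∈ (Finset.univ : Finset (Fin n)),
        (-shannonH (Real.exp (-s k)) / (1 - Real.exp (-s k))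
          - Real.log (1 - Real.exp (-t k))
          + (t k / 2) *
            ((Lᵀ * Dmat n s * L) (Sum.inl k) (Sum.inl k)
              + (Lᵀ * Dmat n s * L) (Sum.inr k) (Sum.inr k)
              + 2 * ((mt (Sum.inl k)) ^ 2 + (mt (Sum.inr k)) ^ 2) - 1))
        = -Real.log (1 - Real.exp (-t k))
          + (Real.log (1 - Real.exp (-s k)) - s k * Real.exp (-s k) / (1 - Real.exp (-s k)))
          + -(t k / 2)
          + (1/2) * (t k * (Lᵀ * Dmat n s * L) (Sum.inl k) (Sum.inl k))
          + (1/2) * (t k * (Lᵀ * Dmat n s * L) (Sum.inr k) (Sum.inr k))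
          + mt (Sum.inl k) * (t k * mt (Sum.inl k))
          + mt (Sum.inr k) * (t k * mt (Sum.inr k)) := by
      intro k _
      have h1 : Real.exp (-s k) < 1 := exp_neg_lt_one (hs k)
      have hne : (1:ℝ) - Real.exp (-s k) ≠ 0 := by nlinarith
      rw [shannonH, Real.log_exp]
      field_simp
      ring
    rw [Finset.sum_congr rfl hZ, Finset.sum_add_distrib, Finset.sum_add_distrib,
      Finset.sum_add_distrib, Finset.sum_add_distrib, Finset.sum_add_distrib,
      Finset.sum_add_distrib, mul_add, Finset.mul_sum, Finset.mul_sum,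
      ← Finset.sum_neg_distrib]
    ring
  rw [hVal]
  exact Filter.Tendsto.congr' heq main
end
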